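/- arXiv:2510.10967 — 4 statements merged into one kernel-verified Lean document; each statement's English description precedes it below -/
import Mathlib

section
/- Let k be a positive integer, a, b, c ∈ 𝔽₂^{2k}, and W a linear subspace of 𝔽₂^{2k} such that the four affine subspaces A₀₀ = a + W, A₀₁ = a + b + W, A₁₀ = a + c + W, A₁₁ = a + b + c + W are pairwise disjoint. Then there exist two disjoint sets B₁ and B₂, each of which is either empty or an affine subspace of 𝔽₂^{2k}, such that |A₀₀ ∩ S_k| + |A₀₁ ∩ S_k| + |A₁₀ ∩ S_k| + |A₁₁ ∩ R_k| = |B₁| + 2·|B₂ ∩ S_k| and |B₁| + |B₂| = 2·|W|. -/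
/-- The quadratic form `q_k(x) = ∑_{i=1}^k x_i · x_{k+i}` on `𝔽₂^{2k}`. -/
def qForm (k : ℕ) (x : Fin (2 * k) → ZMod 2) : ZMod 2 :=
  ∑ i : Fin k, x ⟨i.1, by have := i.2; omega⟩ * x ⟨k + i.1, by have := i.2; omega⟩

/-- `S_k = {x ∈ 𝔽₂^{2k} : q_k(x) = 1}`. -/
def Sset (k : ℕ) : Set (Fin (2 * k) → ZMod 2) := {x | qForm k x = 1}

/-- `R_k = {x ∈ 𝔽₂^{2k} : q_k(x) = 0}`. -/
def Rset (k : ℕ) : Set (Fin (2 * k) → ZMod 2) := {x | qForm k x = 0}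

/-- `A` is an affine subspace: a translate `a + W` of a linear subspace `W`. -/
def IsAffineSubspace {V : Type*} [AddCommGroup V] [Module (ZMod 2) V]
    (A : Set V) : Prop :=
  ∃ (a : V) (W : Submodule (ZMod 2) V), A = (a + ·) '' (W : Set V)

namespace Aux7

abbrev Vk (k : ℕ) := Fin (2 * k) → ZMod 2

def bb (k : ℕ) (x y : Vk k) : ZMod 2 :=
  ∑ i : Fin k, (x ⟨i.1, by have := i.2; omega⟩ * y ⟨k + i.1, by have := i.2; omega⟩
    + y ⟨i.1, by have := i.2; omega⟩ * x ⟨k + i.1, by have := i.2; omega⟩)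

variable {k : ℕ}

lemma qadd (x y : Vk k) : qForm k (x + y) = qForm k x + qForm k y + bb k x y := by
  unfold qForm bb
  rw [← Finset.sum_add_distrib, ← Finset.sum_add_distrib]
  refine Finset.sum_congr rfl fun i _ => ?_
  simp only [Pi.add_apply]
  ring

lemma bbadd (x y z : Vk k) : bb k (x + y) z = bb k x z + bb k y z := by
  unfold bb
  rw [← Finset.sum_add_distrib]
  refine Finset.sum_congr rfl fun i _ => ?_
  simp only [Pi.add_apply]
  ring

lemma bbcomm (x y : Vk k) : bb k x y = bb k y x := by
  unfold bb
  refine Finset.sum_congr rfl fun i _ => ?_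
  ring

lemma bbzero (y : Vk k) : bb k 0 y = 0 := by
  unfold bb
  refine Finset.sum_eq_zero fun i _ => ?_
  simp

lemma z2 : ∀ z : ZMod 2, z = 0 ∨ z = 1 := by decide

lemma zflip0 : ∀ z : ZMod 2, z + 1 = 0 ↔ z = 1 := by decide
lemma zflip1 : ∀ z : ZMod 2, z + 1 = 1 ↔ z = 0 := by decide

lemma subeq (x y : Vk k) : x - y = x + y := by
  funext i
  have : ∀ a b : ZMod 2, a - b = a + b := by decide
  simp [this]

lemma addself (x : Vk k) : x + x = 0 := by
  funext i
  have : ∀ a : ZMod 2, a + a = 0 := by decide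
  simp [this]

lemma quad4 (x u v : Vk k) :
    qForm k (x + u + v) = qForm k x + (qForm k (x + u) + qForm k x)
      + (qForm k (x + v) + qForm k x) + bb k u v := by
  have e1 := qadd (x + u) v
  have e2 := bbadd x u v
  have e3 := qadd x v
  have e4 := qadd x u
  have h2 : (2 : ZMod 2) = 0 := by decide
  linear_combination e1 + e2 - e3 - (2 * qForm k x) * h2

-- counting infra
lemma image_inter_eq (g : Vk k → Vk k) (s T : Set (Vk k)) :
    (g '' s) ∩ T = g '' {x ∈ s | g x ∈ T} := by
  ext y
  constructor
  · rintro ⟨⟨x, hx, rfl⟩, hT⟩; exact ⟨x, ⟨hx, hT⟩, rfl⟩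
  · rintro ⟨x, ⟨hx, hT⟩, rfl⟩; exact ⟨⟨x, hx, rfl⟩, hT⟩

lemma cnt (g : Vk k → Vk k) (s T : Set (Vk k)) (hg : Set.InjOn g s) :
    ((g '' s) ∩ T).ncard = {x ∈ s | g x ∈ T}.ncard := by
  rw [image_inter_eq]
  exact Set.ncard_image_of_injOn (hg.mono (Set.sep_subset _ _))

lemma sep_congr {s : Set (Vk k)} {P P' : Vk k → Prop} (h : ∀ x ∈ s, P x ↔ P' x) :
    {x ∈ s | P x} = {x ∈ s | P' x} := by
  ext x
  exact ⟨fun ⟨h1, h2⟩ => ⟨h1, (h x h1).1 h2⟩, fun ⟨h1, h2⟩ => ⟨h1, (h x h1).2 h2⟩⟩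

lemma split_cnt (s : Set (Vk k)) (f : Vk k → ZMod 2) :
    {x ∈ s | f x = 1}.ncard + {x ∈ s | f x = 0}.ncard = s.ncard := by
  rw [← Set.ncard_union_eq ?hd (Set.toFinite _) (Set.toFinite _)]
  · congr 1
    ext x
    rcases z2 (f x) with h | h <;> simp [h]
  case hd =>
    rw [Set.disjoint_left]
    rintro x ⟨-, h1⟩ ⟨-, h0⟩
    rw [h1] at h0
    exact one_ne_zero h0

lemma injadd (p : Vk k) : Set.InjOn (p + ·) s := fun x _ y _ h => by
  simpa using add_left_cancel h

lemma image_add_add (p q : Vk k) (s : Set (Vk k)) :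
    (p + ·) '' ((q + ·) '' s) = ((p + q) + ·) '' s := by
  rw [← Set.image_comp]
  refine Set.image_congr fun x _ => ?_
  simp [add_assoc]

lemma ncard_coset (p : Vk k) (s : Set (Vk k)) : ((p + ·) '' s).ncard = s.ncard :=
  Set.ncard_image_of_injOn (injadd p)

lemma coset_disj (M : Submodule (ZMod 2) (Vk k)) {p q : Vk k} (h : p + q ∉ M) :
    Disjoint ((p + ·) '' (M : Set (Vk k))) ((q + ·) '' (M : Set (Vk k))) := by
  rw [Set.disjoint_left]
  rintro x ⟨m, hm, rfl⟩ ⟨m', hm', heq⟩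
  apply h
  have heq' : q + m' = p + m := heq
  have h2 : (2 : Vk k) = 0 := by have := addself (1 : Vk k); linear_combination this
  have : p + q = m + m' := by linear_combination -heq' + (q - m) * h2
  rw [this]
  exact add_mem hm hm'

lemma sup_span_set (U : Submodule (ZMod 2) (Vk k)) (v : Vk k) :
    ((U ⊔ Submodule.span (ZMod 2) {v} : Submodule (ZMod 2) (Vk k)) : Set (Vk k))
      = (U : Set (Vk k)) ∪ (v + ·) '' (U : Set (Vk k)) := by
  ext x
  simp only [SetLike.mem_coe, Submodule.mem_sup, Submodule.mem_span_singleton, Set.mem_union,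
    Set.mem_image]
  constructor
  · rintro ⟨y, hy, z, ⟨r, rfl⟩, rfl⟩
    rcases z2 r with h | h
    · subst h; rw [zero_smul, add_zero]; exact Or.inl hy
    · subst h; rw [one_smul]; exact Or.inr ⟨y, hy, (add_comm v y)⟩
  · rintro (hx | ⟨y, hy, rfl⟩)
    · exact ⟨x, hx, 0, ⟨0, zero_smul _ v⟩, add_zero x⟩
    · exact ⟨y, hy, v, ⟨1, one_smul _ v⟩, add_comm y v⟩

lemma ncard_sup_span (U : Submodule (ZMod 2) (Vk k)) (v : Vk k) (hv : v ∉ U) :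
    ((U ⊔ Submodule.span (ZMod 2) {v} : Submodule (ZMod 2) (Vk k)) : Set (Vk k)).ncard
      = 2 * (U : Set (Vk k)).ncard := by
  rw [sup_span_set, Set.ncard_union_eq ?hd (Set.toFinite _) (Set.toFinite _), ncard_coset]
  · ring
  case hd =>
    rw [Set.disjoint_left]
    rintro x hx ⟨u, hu, rfl⟩
    apply hv
    have : v = (v + u) + u := by rw [add_assoc, addself, add_zero]
    rw [this]
    exact Submodule.add_mem _ hx hu

end Aux7

namespace Aux7
variable {k : ℕ}

lemma bbaddr (x y z : Vk k) : bb k x (y + z) = bb k x y + bb k x z := by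
  rw [bbcomm, bbadd, bbcomm y x, bbcomm z x]

lemma h2zero : (2 : ZMod 2) = 0 := by decide

/-- main shift lemma: value of q at `x + u + v` vs at `x + u`, controlled by
the value at `x + v`, `x` and `bb u v`. -/
lemma shift (v x u : Vk k) :
    qForm k (x + u + v) = qForm k (x + u) + (qForm k (x + v) + qForm k x + bb k u v) := by
  have e1 := qadd (x + u) v
  have e2 := bbadd x u v
  have e3 := qadd x v
  have h2 := h2zero
  linear_combination e1 + e2 - e3 - qForm k x * h2

open Classical in
lemma cnt_sum (g : Vk k → Vk k) (s T : Set (Vk k)) (hg : Set.InjOn g s) :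
    ((g '' s) ∩ T).ncard = ∑ w ∈ (Set.toFinite s).toFinset, (if g w ∈ T then 1 else 0) := by
  rw [cnt g s T hg]
  have h : {x ∈ s | g x ∈ T} = ↑((Set.toFinite s).toFinset.filter fun x => g x ∈ T) := by
    ext x
    simp only [Set.mem_setOf_eq, Finset.coe_filter, Set.Finite.mem_toFinset]
  rw [h, Set.ncard_coe_finset, Finset.card_filter]

lemma ncard_eq_card_toFinset (s : Set (Vk k)) :
    s.ncard = (Set.toFinite s).toFinset.card := Set.ncard_eq_toFinset_card _ _

lemma h2V : (2 : Vk k) = 0 := by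
  have := addself (1 : Vk k); linear_combination this

def lf (k : ℕ) (v : Vk k) : Vk k →ₗ[ZMod 2] ZMod 2 where
  toFun w := bb k w v
  map_add' x y := bbadd x y v
  map_smul' r x := by
    rcases z2 r with rfl | rfl
    · simp [bbzero]
    · simp

lemma lf_apply (v w : Vk k) : lf k v w = bb k w v := rfl

lemma piece (p : Vk k) (s T : Set (Vk k)) (P : Vk k → Prop)
    (h : ∀ x ∈ s, ((p + x) ∈ T ↔ P x)) :
    (((p + ·) '' s) ∩ T).ncard = {x ∈ s | P x}.ncard := by
  rw [cnt _ _ _ (injadd p)]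
  exact congrArg Set.ncard (sep_congr h)

end Aux7

set_option maxHeartbeats 2000000 in
open Aux7 in
theorem stmt_7 (k : ℕ) (hk : 0 < k) (a b c : Fin (2 * k) → ZMod 2)
    (W : Submodule (ZMod 2) (Fin (2 * k) → ZMod 2))
    (hdisj : ([(a + ·) '' (W : Set _), (a + b + ·) '' (W : Set _),
        (a + c + ·) '' (W : Set _), (a + b + c + ·) '' (W : Set _)] :
        List (Set (Fin (2 * k) → ZMod 2))).Pairwise Disjoint) :
    ∃ B₁ B₂ : Set (Fin (2 * k) → ZMod 2),
      Disjoint B₁ B₂ ∧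
      (B₁ = ∅ ∨ IsAffineSubspace B₁) ∧
      (B₂ = ∅ ∨ IsAffineSubspace B₂) ∧
      ((a + ·) '' (W : Set _) ∩ Sset k).ncard
          + ((a + b + ·) '' (W : Set _) ∩ Sset k).ncard
          + ((a + c + ·) '' (W : Set _) ∩ Sset k).ncard
          + ((a + b + c + ·) '' (W : Set _) ∩ Rset k).ncard
        = B₁.ncard + 2 * (B₂ ∩ Sset k).ncard ∧
      B₁.ncard + B₂.ncard = 2 * (W : Set (Fin (2 * k) → ZMod 2)).ncard := by
  classical
  obtain ⟨h0, hrest⟩ := List.pairwise_cons.mp hdisj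
  have hd01 : Disjoint ((a + ·) '' (W : Set _)) ((a + b + ·) '' (W : Set _)) :=
    h0 _ (by simp)
  have hd02 : Disjoint ((a + ·) '' (W : Set _)) ((a + c + ·) '' (W : Set _)) :=
    h0 _ (by simp)
  have hd03 : Disjoint ((a + ·) '' (W : Set _)) ((a + b + c + ·) '' (W : Set _)) :=
    h0 _ (by simp)
  have hbW : b ∉ W := by
    intro hmem
    exact Set.disjoint_left.mp hd01 ⟨b, hmem, rfl⟩ ⟨0, W.zero_mem, by simp⟩
  have hcW : c ∉ W := by
    intro hmem
    exact Set.disjoint_left.mp hd02 ⟨c, hmem, rfl⟩ ⟨0, W.zero_mem, by simp⟩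
  have hbcW : b + c ∉ W := by
    intro hmem
    exact Set.disjoint_left.mp hd03 ⟨b + c, hmem, rfl⟩ ⟨0, W.zero_mem, by simp [add_assoc]⟩
  rcases z2 (bb k b c) with hε0 | hε1
  · -- block A : ε = 0, use the shear map w ↦ w + (bb w b) • c
    set L : (Fin (2 * k) → ZMod 2) →ₗ[ZMod 2] (Fin (2 * k) → ZMod 2) :=
      LinearMap.id + (lf k b).smulRight c with hLdef
    have hLapp : ∀ x, L x = x + bb k x b • c := by
      intro x
      rw [hLdef]
      simp [lf_apply]
    have hLinj : Set.InjOn (fun w => L w) (W : Set (Fin (2 * k) → ZMod 2)) := by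
      intro x hx y hy heq
      simp only [hLapp] at heq
      rcases z2 (bb k x b) with hx0 | hx0 <;> rcases z2 (bb k y b) with hy0 | hy0 <;>
        rw [hx0, hy0] at heq <;>
        simp only [zero_smul, one_smul, add_zero] at heq
      · exact heq
      · exfalso
        apply hcW
        have he : c = x + y := by linear_combination -heq - y * h2V
        rw [he]
        exact W.add_mem hx hy
      · exfalso
        apply hcW
        have he : c = x + y := by linear_combination heq - x * h2V
        rw [he]
        exact W.add_mem hx hy
      · exact add_right_cancel heq
    have hcM : c ∉ W.map L := by
      rintro ⟨w, hwW, heq⟩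
      rw [hLapp] at heq
      rcases z2 (bb k w b) with h | h <;> rw [h] at heq <;>
        simp only [zero_smul, one_smul, add_zero] at heq
      · exact hcW (heq ▸ hwW)
      · have hw0 : w = 0 := by linear_combination heq
        rw [hw0] at h
        rw [bbzero] at h
        exact one_ne_zero h.symm
    set p : Fin (2 * k) → ZMod 2 := a + (qForm k (a + b) + qForm k a) • c with hp
    have hMcoe : ((W.map L : Submodule (ZMod 2) (Fin (2 * k) → ZMod 2)) :
        Set (Fin (2 * k) → ZMod 2)) = (fun w => L w) '' (W : Set (Fin (2 * k) → ZMod 2)) :=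
      Submodule.map_coe _ _
    have hB2img : ∀ u : Fin (2 * k) → ZMod 2, (u + ·) ''
          ((W.map L : Submodule (ZMod 2) (Fin (2 * k) → ZMod 2)) : Set (Fin (2 * k) → ZMod 2))
        = (fun w => u + L w) '' (W : Set (Fin (2 * k) → ZMod 2)) := by
      intro u
      rw [hMcoe, Set.image_image]
    have hg2inj : ∀ u : Fin (2 * k) → ZMod 2,
        Set.InjOn (fun w => u + L w) (W : Set (Fin (2 * k) → ZMod 2)) := by
      intro u x hx y hy heq
      exact hLinj hx hy (add_left_cancel heq)
    have hMsz : ((W.map L : Submodule (ZMod 2) (Fin (2 * k) → ZMod 2)) :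
          Set (Fin (2 * k) → ZMod 2)).ncard
        = (W : Set (Fin (2 * k) → ZMod 2)).ncard := by
      rw [hMcoe]
      exact Set.ncard_image_of_injOn hLinj
    refine ⟨((p + c) + ·) ''
        ((W.map L : Submodule (ZMod 2) (Fin (2 * k) → ZMod 2)) : Set (Fin (2 * k) → ZMod 2)),
      (p + ·) ''
        ((W.map L : Submodule (ZMod 2) (Fin (2 * k) → ZMod 2)) : Set (Fin (2 * k) → ZMod 2)),
      ?_, Or.inr ⟨p + c, W.map L, rfl⟩, Or.inr ⟨p, W.map L, rfl⟩, ?_, ?_⟩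
    · refine coset_disj (W.map L) ?_
      intro hm
      rw [show (p + c) + p = c from by linear_combination addself p] at hm
      exact hcM hm
    · have hB1sz : (((p + c) + ·) ''
            ((W.map L : Submodule (ZMod 2) (Fin (2 * k) → ZMod 2)) :
              Set (Fin (2 * k) → ZMod 2))).ncard
          = (W : Set (Fin (2 * k) → ZMod 2)).ncard := by
        rw [ncard_coset, hMsz]
      have hB2S : ((p + ·) ''
            ((W.map L : Submodule (ZMod 2) (Fin (2 * k) → ZMod 2)) :
              Set (Fin (2 * k) → ZMod 2)) ∩ Sset k).ncard
          = ∑ w ∈ (Set.toFinite ((W : Set (Fin (2 * k) → ZMod 2)))).toFinset,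
              (if (fun w => p + L w) w ∈ Sset k then 1 else 0) := by
        rw [hB2img p, cnt_sum _ _ _ (hg2inj p)]
      rw [hB1sz, hB2S,
        cnt_sum _ _ _ (injadd _), cnt_sum _ _ _ (injadd _), cnt_sum _ _ _ (injadd _),
        cnt_sum _ _ _ (injadd _), ← Finset.sum_add_distrib, ← Finset.sum_add_distrib,
        ← Finset.sum_add_distrib, Finset.mul_sum,
        ncard_eq_card_toFinset (W : Set (Fin (2 * k) → ZMod 2)), Finset.card_eq_sum_ones,
        ← Finset.sum_add_distrib]
      refine Finset.sum_congr rfl ?_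
      intro w hwF
      have hw : w ∈ W := by
        have := (Set.Finite.mem_toFinset _).mp hwF
        simpa using this
      have e1 : a + b + w = a + w + b := by abel
      have e2 : a + c + w = a + w + c := by abel
      have e3 : a + b + c + w = a + w + b + c := by abel
      have hq4 := quad4 (a + w) b c
      rw [hε0] at hq4
      have hco : qForm k (a + w + b) + qForm k (a + w)
          = qForm k (a + b) + qForm k a + bb k w b := by
        linear_combination shift b a w + qForm k (a + w) * h2zero
      have hval : p + L w = (a + w) + (qForm k (a + w + b) + qForm k (a + w)) • c := by
        rw [hLapp w, hp, hco]
        module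
      simp only [Sset, Rset, Set.mem_setOf_eq, e1, e2, e3, hval]
      rcases z2 (qForm k (a + w + b) + qForm k (a + w)) with hl | hl <;>
        simp only [hl, zero_smul, one_smul, add_zero] <;>
        rcases z2 (qForm k (a + w)) with h1 | h1 <;>
        rcases z2 (qForm k (a + w + b)) with h2 | h2 <;>
        rcases z2 (qForm k (a + w + c)) with h3 | h3 <;>
        rcases z2 (qForm k (a + w + b + c)) with h4 | h4 <;>
        rw [h1, h2, h3, h4] at hq4 <;> rw [h1, h2] at hl <;>
        first
          | exact absurd hq4 (by decide)
          | exact absurd hl (by decide)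
          | simp [h1, h2, h3, h4]
    · rw [ncard_coset, ncard_coset, hMsz]
      ring
  · by_cases hE : ∃ w ∈ W,
        qForm k (a + b + w) = qForm k (a + w) ∧ qForm k (a + c + w) = qForm k (a + w)
    · obtain ⟨w0, hw0W, hw0b, hw0c⟩ := hE
      by_cases hbz : ∀ w ∈ W, bb k w b = 0
      · -- block C : ℓb ≡ 0 on the coset a + W
        have hcb : bb k c b = 1 := by rw [bbcomm]; exact hε1
        have hℓba : qForm k (a + b) + qForm k a = 0 := by
          have s1 := shift b a w0
          have sh : a + b + w0 = a + w0 + b := by abel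
          rw [sh] at hw0b
          have hb0 := hbz w0 hw0W
          linear_combination -s1 + hw0b - hb0
        have V1 : ∀ w ∈ W, qForm k (a + b + w) = qForm k (a + w) := by
          intro w hw
          have sh : a + b + w = a + w + b := by abel
          rw [sh]
          have s1 := shift b a w
          linear_combination s1 + hℓba + hbz w hw
        have V2 : ∀ w ∈ W, qForm k (a + b + c + w) = qForm k (a + c + w) + 1 := by
          intro w hw
          have sh : a + b + c + w = a + c + w + b := by abel
          rw [sh]
          have s1 := shift b (a + c) w
          have s2 := shift b a c
          linear_combination s1 + s2 + hℓba + hcb + hbz w hw + qForm k (a + c) * h2zero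
        refine ⟨∅, (a + ·) '' ((W ⊔ Submodule.span (ZMod 2) {c} : Submodule (ZMod 2) _) : Set _), by simp,
          Or.inl rfl, Or.inr ⟨a, W ⊔ Submodule.span (ZMod 2) {c}, rfl⟩, ?_, ?_⟩
        · have hA01 : ((a + b + ·) '' (W : Set _) ∩ Sset k).ncard
              = ((a + ·) '' (W : Set _) ∩ Sset k).ncard := by
            rw [cnt _ _ _ (injadd _), cnt _ _ _ (injadd _)]
            apply congrArg
            apply sep_congr
            intro w hw
            show (a + b + w ∈ Sset k) ↔ (a + w ∈ Sset k)
            simp only [Sset, Set.mem_setOf_eq]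
            rw [V1 w hw]
          have hA11 : ((a + b + c + ·) '' (W : Set _) ∩ Rset k).ncard
              = ((a + c + ·) '' (W : Set _) ∩ Sset k).ncard := by
            rw [cnt _ _ _ (injadd _), cnt _ _ _ (injadd _)]
            apply congrArg
            apply sep_congr
            intro w hw
            show (a + b + c + w ∈ Rset k) ↔ (a + c + w ∈ Sset k)
            simp only [Sset, Rset, Set.mem_setOf_eq]
            rw [V2 w hw]
            exact zflip0 _
          have hB2S : ((a + ·) '' ((W ⊔ Submodule.span (ZMod 2) {c} : Submodule (ZMod 2) _) : Set _) ∩ Sset k).ncard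
              = ((a + ·) '' (W : Set _) ∩ Sset k).ncard
                + ((a + c + ·) '' (W : Set _) ∩ Sset k).ncard := by
            rw [sup_span_set, Set.image_union, image_add_add, Set.union_inter_distrib_right,
              Set.ncard_union_eq ?dd (Set.toFinite _) (Set.toFinite _)]
            case dd =>
              refine Set.disjoint_of_subset Set.inter_subset_left Set.inter_subset_left ?_
              refine coset_disj W ?_
              have e : a + (a + c) = c := by rw [← add_assoc, addself, zero_add]
              rw [e]; exact hcW
          rw [hA01, hA11, hB2S, Set.ncard_empty]
          ring
        · rw [Set.ncard_empty, ncard_coset, ncard_sup_span W c hcW]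
          ring
      · obtain ⟨w1, hw1W, hw1b⟩ : ∃ w ∈ W, bb k w b = 1 := by
          push_neg at hbz
          obtain ⟨w1, hw, hne⟩ := hbz
          rcases z2 (bb k w1 b) with h | h
          · exact absurd h hne
          · exact ⟨w1, hw, h⟩
        by_cases hcz : ∀ w ∈ W, bb k w c = 0
        · -- block C' : ℓc ≡ 0 on the coset a + W
          have hℓca : qForm k (a + c) + qForm k a = 0 := by
            have s1 := shift c a w0
            have sh : a + c + w0 = a + w0 + c := by abel
            rw [sh] at hw0c
            linear_combination -s1 + hw0c - hcz w0 hw0W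
          have V1 : ∀ w ∈ W, qForm k (a + c + w) = qForm k (a + w) := by
            intro w hw
            have sh : a + c + w = a + w + c := by abel
            rw [sh]
            have s1 := shift c a w
            linear_combination s1 + hℓca + hcz w hw
          have V2 : ∀ w ∈ W, qForm k (a + b + c + w) = qForm k (a + b + w) + 1 := by
            intro w hw
            have sh : a + b + c + w = a + b + w + c := by abel
            rw [sh]
            have s1 := shift c (a + b) w
            have s2 := shift c a b
            linear_combination s1 + s2 + hℓca + hε1 + hcz w hw + qForm k (a + b) * h2zero
          refine ⟨∅, (a + ·) '' ((W ⊔ Submodule.span (ZMod 2) {b} : Submodule (ZMod 2) _) : Set _),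
            by simp, Or.inl rfl, Or.inr ⟨a, W ⊔ Submodule.span (ZMod 2) {b}, rfl⟩, ?_, ?_⟩
          · have hA10 : ((a + c + ·) '' (W : Set _) ∩ Sset k).ncard
                = ((a + ·) '' (W : Set _) ∩ Sset k).ncard := by
              rw [cnt _ _ _ (injadd _), cnt _ _ _ (injadd _)]
              apply congrArg
              apply sep_congr
              intro w hw
              show (a + c + w ∈ Sset k) ↔ (a + w ∈ Sset k)
              simp only [Sset, Set.mem_setOf_eq]
              rw [V1 w hw]
            have hA11 : ((a + b + c + ·) '' (W : Set _) ∩ Rset k).ncard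
                = ((a + b + ·) '' (W : Set _) ∩ Sset k).ncard := by
              rw [cnt _ _ _ (injadd _), cnt _ _ _ (injadd _)]
              apply congrArg
              apply sep_congr
              intro w hw
              show (a + b + c + w ∈ Rset k) ↔ (a + b + w ∈ Sset k)
              simp only [Sset, Rset, Set.mem_setOf_eq]
              rw [V2 w hw]
              exact zflip0 _
            have hB2S : ((a + ·) '' ((W ⊔ Submodule.span (ZMod 2) {b} : Submodule (ZMod 2) _) : Set _) ∩ Sset k).ncard
                = ((a + ·) '' (W : Set _) ∩ Sset k).ncard
                  + ((a + b + ·) '' (W : Set _) ∩ Sset k).ncard := by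
              rw [sup_span_set, Set.image_union, image_add_add, Set.union_inter_distrib_right,
                Set.ncard_union_eq ?dd (Set.toFinite _) (Set.toFinite _)]
              case dd =>
                refine Set.disjoint_of_subset Set.inter_subset_left Set.inter_subset_left ?_
                refine coset_disj W ?_
                have e : a + (a + b) = b := by rw [← add_assoc, addself, zero_add]
                rw [e]; exact hbW
            rw [hA10, hA11, hB2S, Set.ncard_empty]
            ring
          · rw [Set.ncard_empty, ncard_coset, ncard_sup_span W b hbW]
            ring
        · obtain ⟨w2, hw2W, hw2c⟩ : ∃ w ∈ W, bb k w c = 1 := by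
            push_neg at hcz
            obtain ⟨w2, hw, hne⟩ := hcz
            rcases z2 (bb k w2 c) with h | h
            · exact absurd h hne
            · exact ⟨w2, hw, h⟩
          by_cases hsame : ∀ w ∈ W, bb k w b = bb k w c
          · -- block D3 : λb = λc on W, both nonzero
            have hw1c : bb k w1 c = 1 := by rw [← hsame w1 hw1W]; exact hw1b
            set U : Submodule (ZMod 2) (Fin (2 * k) → ZMod 2) :=
              (W ⊓ LinearMap.ker (lf k b)) ⊓ LinearMap.ker (lf k c) with hUdef
            have hUmem : ∀ x, x ∈ U ↔ x ∈ W ∧ bb k x b = 0 ∧ bb k x c = 0 := by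
              intro x
              simp [hUdef, Submodule.mem_inf, LinearMap.mem_ker, lf_apply, and_assoc]
            have hUW : ∀ x, x ∈ U → x ∈ W := fun x hx => ((hUmem x).mp hx).1
            have hbU : b ∉ U := fun h => hbW (hUW b h)
            have hcU : c ∉ U := fun h => hcW (hUW c h)
            have hbcU : b + c ∉ U := fun h => hbcW (hUW _ h)
            have hcbU : c + b ∉ U := by rw [add_comm]; exact hbcU
            have hw1U : w1 ∉ U := by
              intro h
              have h' := ((hUmem w1).mp h).2.1
              rw [hw1b] at h'
              exact one_ne_zero h'
            have hw0b' : qForm k (a + w0 + b) = qForm k (a + w0) := by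
              have sh : a + w0 + b = a + b + w0 := by abel
              rw [sh]; exact hw0b
            have hw0c' : qForm k (a + w0 + c) = qForm k (a + w0) := by
              have sh : a + w0 + c = a + c + w0 := by abel
              rw [sh]; exact hw0c
            have hLab : qForm k (a + b) + qForm k a = bb k w0 b := by
              have s1 := shift b a w0
              linear_combination hw0b' - s1 - bb k w0 b * h2zero
            have hLac : qForm k (a + c) + qForm k a = bb k w0 c := by
              have s1 := shift c a w0
              linear_combination hw0c' - s1 - bb k w0 c * h2zero
            have VB : ∀ d x : Fin (2 * k) → ZMod 2, qForm k (a + d + x + b)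
                = qForm k (a + d + x) + (qForm k (a + b) + qForm k a + bb k d b + bb k x b) := by
              intro d x
              have s1 := shift b a (d + x)
              have sh1 : a + (d + x) + b = a + d + x + b := by abel
              have sh2 : a + (d + x) = a + d + x := by abel
              rw [sh1, sh2] at s1
              linear_combination s1 + bbadd d x b
            have VC : ∀ d x : Fin (2 * k) → ZMod 2, qForm k (a + d + x + c)
                = qForm k (a + d + x) + (qForm k (a + c) + qForm k a + bb k d c + bb k x c) := by
              intro d x
              have s1 := shift c a (d + x)
              have sh1 : a + (d + x) + c = a + d + x + c := by abel
              have sh2 : a + (d + x) = a + d + x := by abel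
              rw [sh1, sh2] at s1
              linear_combination s1 + bbadd d x c
            have VBC : ∀ d x : Fin (2 * k) → ZMod 2, qForm k (a + d + x + b + c)
                = qForm k (a + d + x) + (qForm k (a + b) + qForm k a + bb k d b + bb k x b)
                  + (qForm k (a + c) + qForm k a + bb k d c + bb k x c) + 1 := by
              intro d x
              have q4 := quad4 (a + d + x) b c
              rw [hε1] at q4
              linear_combination q4 + VB d x + VC d x + (2 * qForm k (a + d + x)) * h2zero
            have val0b : ∀ x : Fin (2 * k) → ZMod 2, bb k x b = 0 →
                qForm k (a + w0 + x + b) = qForm k (a + w0 + x) := by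
              intro x hxb
              linear_combination VB w0 x + hLab + hxb + bb k w0 b * h2zero
            have val0c : ∀ x : Fin (2 * k) → ZMod 2, bb k x c = 0 →
                qForm k (a + w0 + x + c) = qForm k (a + w0 + x) := by
              intro x hxc
              linear_combination VC w0 x + hLac + hxc + bb k w0 c * h2zero
            have val0bc : ∀ x : Fin (2 * k) → ZMod 2, bb k x b = 0 → bb k x c = 0 →
                qForm k (a + w0 + x + b + c) = qForm k (a + w0 + x) + 1 := by
              intro x hxb hxc
              linear_combination VBC w0 x + hLab + hLac + hxb + hxc
                + (bb k w0 b + bb k w0 c) * h2zero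
            have val1b : ∀ x : Fin (2 * k) → ZMod 2, bb k x b = 0 →
                qForm k (a + (w0 + w1) + x + b) = qForm k (a + (w0 + w1) + x) + 1 := by
              intro x hxb
              linear_combination VB (w0 + w1) x + bbadd w0 w1 b + hLab + hw1b + hxb
                + bb k w0 b * h2zero
            have val1c : ∀ x : Fin (2 * k) → ZMod 2, bb k x c = 0 →
                qForm k (a + (w0 + w1) + x + c) = qForm k (a + (w0 + w1) + x) + 1 := by
              intro x hxc
              linear_combination VC (w0 + w1) x + bbadd w0 w1 c + hLac + hw1c + hxc
                + bb k w0 c * h2zero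
            have val1bc : ∀ x : Fin (2 * k) → ZMod 2, bb k x b = 0 → bb k x c = 0 →
                qForm k (a + (w0 + w1) + x + b + c) = qForm k (a + (w0 + w1) + x) + 1 := by
              intro x hxb hxc
              linear_combination VBC (w0 + w1) x + bbadd w0 w1 b + bbadd w0 w1 c + hLab + hLac
                + hw1b + hw1c + hxb + hxc + (bb k w0 b + bb k w0 c + 1) * h2zero
            -- partition of W
            have hWU : (W : Set (Fin (2 * k) → ZMod 2))
                = ((w0 + ·) '' (U : Set (Fin (2 * k) → ZMod 2)))
                  ∪ (((w0 + w1) + ·) '' (U : Set (Fin (2 * k) → ZMod 2))) := by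
              ext x
              constructor
              · intro hx
                have hxW : x ∈ W := hx
                rcases z2 (bb k (w0 + x) b) with h | h
                · left
                  refine ⟨w0 + x, ?_, by linear_combination addself w0⟩
                  refine (hUmem _).mpr ⟨W.add_mem hw0W hxW, h, ?_⟩
                  rw [← hsame _ (W.add_mem hw0W hxW)]; exact h
                · right
                  have hub : bb k (w0 + w1 + x) b = 0 := by
                    linear_combination bbadd (w0 + w1) x b + bbadd w0 w1 b - bbadd w0 x b
                      + h + hw1b + h2zero
                  refine ⟨w0 + w1 + x, ?_, by linear_combination addself w0 + addself w1⟩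
                  refine (hUmem _).mpr ⟨W.add_mem (W.add_mem hw0W hw1W) hxW, hub, ?_⟩
                  rw [← hsame _ (W.add_mem (W.add_mem hw0W hw1W) hxW)]; exact hub
              · rintro (⟨u, hu, rfl⟩ | ⟨u, hu, rfl⟩)
                · exact W.add_mem hw0W (hUW u hu)
                · exact W.add_mem (W.add_mem hw0W hw1W) (hUW u hu)
            have hdisj2 : ∀ (p q : Fin (2 * k) → ZMod 2), p + q ∉ U →
                ∀ T1 T2 : Set (Fin (2 * k) → ZMod 2),
                Disjoint ((p + ·) '' (U : Set (Fin (2 * k) → ZMod 2)) ∩ T1)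
                  ((q + ·) '' (U : Set (Fin (2 * k) → ZMod 2)) ∩ T2) :=
              fun p q hpq T1 T2 => Set.disjoint_of_subset Set.inter_subset_left
                Set.inter_subset_left (coset_disj U hpq)
            have hdisjP : ∀ (p : Fin (2 * k) → ZMod 2) (T : Set (Fin (2 * k) → ZMod 2)),
                Disjoint (((p + w0) + ·) '' (U : Set (Fin (2 * k) → ZMod 2)) ∩ T)
                  (((p + (w0 + w1)) + ·) '' (U : Set (Fin (2 * k) → ZMod 2)) ∩ T) := by
              intro p T
              refine hdisj2 _ _ ?_ T T
              intro hm
              rw [show (p + w0) + (p + (w0 + w1)) = w1 from by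
                linear_combination addself p + addself w0] at hm
              exact hw1U hm
            have hdisjP0 : Disjoint ((w0 + ·) '' (U : Set (Fin (2 * k) → ZMod 2)))
                (((w0 + w1) + ·) '' (U : Set (Fin (2 * k) → ZMod 2))) := by
              refine coset_disj U ?_
              intro hm
              rw [show w0 + (w0 + w1) = w1 from by linear_combination addself w0] at hm
              exact hw1U hm
            set M : Submodule (ZMod 2) (Fin (2 * k) → ZMod 2) :=
              (U ⊔ Submodule.span (ZMod 2) {b}) ⊔ Submodule.span (ZMod 2) {c} with hMdef
            have hcUspb : c ∉ U ⊔ Submodule.span (ZMod 2) {b} := by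
              intro hmem
              have hmem' : c ∈ ((U ⊔ Submodule.span (ZMod 2) {b} : Submodule (ZMod 2) _) :
                  Set (Fin (2 * k) → ZMod 2)) := hmem
              rw [sup_span_set] at hmem'
              rcases hmem' with h | ⟨u, hu, heq⟩
              · exact hcU h
              · apply hbcW
                have he : u = b + c := by linear_combination heq - b * h2V
                rw [← he]
                exact hUW u hu
            have hMset : (M : Set (Fin (2 * k) → ZMod 2))
                = ((U : Set (Fin (2 * k) → ZMod 2)) ∪ (b + ·) '' (U : Set (Fin (2 * k) → ZMod 2)))
                  ∪ ((c + ·) '' (U : Set (Fin (2 * k) → ZMod 2))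
                    ∪ ((c + b) + ·) '' (U : Set (Fin (2 * k) → ZMod 2))) := by
              rw [hMdef, sup_span_set, sup_span_set, Set.image_union, image_add_add]
            -- canonical pieces
            have p00a : (((a + w0) + ·) '' (U : Set (Fin (2 * k) → ZMod 2)) ∩ Sset k).ncard
                = {x ∈ (U : Set (Fin (2 * k) → ZMod 2)) | qForm k (a + w0 + x) = 1}.ncard :=
              piece _ _ _ _ (fun x _ => Iff.rfl)
            have p00b : (((a + (w0 + w1)) + ·) '' (U : Set (Fin (2 * k) → ZMod 2)) ∩ Sset k).ncard
                = {x ∈ (U : Set (Fin (2 * k) → ZMod 2)) | qForm k (a + (w0 + w1) + x) = 1}.ncard :=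
              piece _ _ _ _ (fun x _ => Iff.rfl)
            have p01a : (((a + b + w0) + ·) '' (U : Set (Fin (2 * k) → ZMod 2)) ∩ Sset k).ncard
                = {x ∈ (U : Set (Fin (2 * k) → ZMod 2)) | qForm k (a + w0 + x) = 1}.ncard := by
              refine piece _ _ _ _ fun x hx => ?_
              obtain ⟨-, hxb, hxc⟩ := (hUmem x).mp hx
              show qForm k (a + b + w0 + x) = 1 ↔ _
              have sh : a + b + w0 + x = a + w0 + x + b := by abel
              rw [sh, val0b x hxb]
            have p01b : (((a + b + (w0 + w1)) + ·) '' (U : Set (Fin (2 * k) → ZMod 2)) ∩ Sset k).ncard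
                = {x ∈ (U : Set (Fin (2 * k) → ZMod 2)) | qForm k (a + (w0 + w1) + x) = 0}.ncard := by
              refine piece _ _ _ _ fun x hx => ?_
              obtain ⟨-, hxb, hxc⟩ := (hUmem x).mp hx
              show qForm k (a + b + (w0 + w1) + x) = 1 ↔ _
              have sh : a + b + (w0 + w1) + x = a + (w0 + w1) + x + b := by abel
              rw [sh, val1b x hxb]
              exact zflip1 _
            have p10a : (((a + c + w0) + ·) '' (U : Set (Fin (2 * k) → ZMod 2)) ∩ Sset k).ncard
                = {x ∈ (U : Set (Fin (2 * k) → ZMod 2)) | qForm k (a + w0 + x) = 1}.ncard := by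
              refine piece _ _ _ _ fun x hx => ?_
              obtain ⟨-, hxb, hxc⟩ := (hUmem x).mp hx
              show qForm k (a + c + w0 + x) = 1 ↔ _
              have sh : a + c + w0 + x = a + w0 + x + c := by abel
              rw [sh, val0c x hxc]
            have p10b : (((a + c + (w0 + w1)) + ·) '' (U : Set (Fin (2 * k) → ZMod 2)) ∩ Sset k).ncard
                = {x ∈ (U : Set (Fin (2 * k) → ZMod 2)) | qForm k (a + (w0 + w1) + x) = 0}.ncard := by
              refine piece _ _ _ _ fun x hx => ?_
              obtain ⟨-, hxb, hxc⟩ := (hUmem x).mp hx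
              show qForm k (a + c + (w0 + w1) + x) = 1 ↔ _
              have sh : a + c + (w0 + w1) + x = a + (w0 + w1) + x + c := by abel
              rw [sh, val1c x hxc]
              exact zflip1 _
            have p11a : (((a + b + c + w0) + ·) '' (U : Set (Fin (2 * k) → ZMod 2)) ∩ Rset k).ncard
                = {x ∈ (U : Set (Fin (2 * k) → ZMod 2)) | qForm k (a + w0 + x) = 1}.ncard := by
              refine piece _ _ _ _ fun x hx => ?_
              obtain ⟨-, hxb, hxc⟩ := (hUmem x).mp hx
              show qForm k (a + b + c + w0 + x) = 0 ↔ _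
              have sh : a + b + c + w0 + x = a + w0 + x + b + c := by abel
              rw [sh, val0bc x hxb hxc]
              exact zflip0 _
            have p11b : (((a + b + c + (w0 + w1)) + ·) '' (U : Set (Fin (2 * k) → ZMod 2)) ∩ Rset k).ncard
                = {x ∈ (U : Set (Fin (2 * k) → ZMod 2)) | qForm k (a + (w0 + w1) + x) = 1}.ncard := by
              refine piece _ _ _ _ fun x hx => ?_
              obtain ⟨-, hxb, hxc⟩ := (hUmem x).mp hx
              show qForm k (a + b + c + (w0 + w1) + x) = 0 ↔ _
              have sh : a + b + c + (w0 + w1) + x = a + (w0 + w1) + x + b + c := by abel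
              rw [sh, val1bc x hxb hxc]
              exact zflip0 _
            have pB2b : (((a + w0 + b) + ·) '' (U : Set (Fin (2 * k) → ZMod 2)) ∩ Sset k).ncard
                = {x ∈ (U : Set (Fin (2 * k) → ZMod 2)) | qForm k (a + w0 + x) = 1}.ncard := by
              refine piece _ _ _ _ fun x hx => ?_
              obtain ⟨-, hxb, hxc⟩ := (hUmem x).mp hx
              show qForm k (a + w0 + b + x) = 1 ↔ _
              have sh : a + w0 + b + x = a + w0 + x + b := by abel
              rw [sh, val0b x hxb]
            have pB2c : (((a + w0 + c) + ·) '' (U : Set (Fin (2 * k) → ZMod 2)) ∩ Sset k).ncard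
                = {x ∈ (U : Set (Fin (2 * k) → ZMod 2)) | qForm k (a + w0 + x) = 1}.ncard := by
              refine piece _ _ _ _ fun x hx => ?_
              obtain ⟨-, hxb, hxc⟩ := (hUmem x).mp hx
              show qForm k (a + w0 + c + x) = 1 ↔ _
              have sh : a + w0 + c + x = a + w0 + x + c := by abel
              rw [sh, val0c x hxc]
            have pB2bc : (((a + w0 + (c + b)) + ·) '' (U : Set (Fin (2 * k) → ZMod 2)) ∩ Sset k).ncard
                = {x ∈ (U : Set (Fin (2 * k) → ZMod 2)) | qForm k (a + w0 + x) = 0}.ncard := by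
              refine piece _ _ _ _ fun x hx => ?_
              obtain ⟨-, hxb, hxc⟩ := (hUmem x).mp hx
              show qForm k (a + w0 + (c + b) + x) = 1 ↔ _
              have sh : a + w0 + (c + b) + x = a + w0 + x + b + c := by abel
              rw [sh, val0bc x hxb hxc]
              exact zflip1 _
            refine ⟨∅, ((a + w0) + ·) '' (M : Set (Fin (2 * k) → ZMod 2)), by simp,
              Or.inl rfl, Or.inr ⟨a + w0, M, rfl⟩, ?_, ?_⟩
            · have hA00 : ((a + ·) '' (W : Set (Fin (2 * k) → ZMod 2)) ∩ Sset k).ncard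
                  = {x ∈ (U : Set (Fin (2 * k) → ZMod 2)) | qForm k (a + w0 + x) = 1}.ncard
                    + {x ∈ (U : Set (Fin (2 * k) → ZMod 2)) | qForm k (a + (w0 + w1) + x) = 1}.ncard := by
                rw [hWU, Set.image_union, image_add_add, image_add_add,
                  Set.union_inter_distrib_right,
                  Set.ncard_union_eq (hdisjP a _) (Set.toFinite _) (Set.toFinite _), p00a, p00b]
              have hA01 : ((a + b + ·) '' (W : Set (Fin (2 * k) → ZMod 2)) ∩ Sset k).ncard
                  = {x ∈ (U : Set (Fin (2 * k) → ZMod 2)) | qForm k (a + w0 + x) = 1}.ncard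
                    + {x ∈ (U : Set (Fin (2 * k) → ZMod 2)) | qForm k (a + (w0 + w1) + x) = 0}.ncard := by
                rw [hWU, Set.image_union, image_add_add, image_add_add,
                  Set.union_inter_distrib_right,
                  Set.ncard_union_eq (hdisjP (a + b) _) (Set.toFinite _) (Set.toFinite _), p01a, p01b]
              have hA10 : ((a + c + ·) '' (W : Set (Fin (2 * k) → ZMod 2)) ∩ Sset k).ncard
                  = {x ∈ (U : Set (Fin (2 * k) → ZMod 2)) | qForm k (a + w0 + x) = 1}.ncard
                    + {x ∈ (U : Set (Fin (2 * k) → ZMod 2)) | qForm k (a + (w0 + w1) + x) = 0}.ncard := by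
                rw [hWU, Set.image_union, image_add_add, image_add_add,
                  Set.union_inter_distrib_right,
                  Set.ncard_union_eq (hdisjP (a + c) _) (Set.toFinite _) (Set.toFinite _), p10a, p10b]
              have hA11 : ((a + b + c + ·) '' (W : Set (Fin (2 * k) → ZMod 2)) ∩ Rset k).ncard
                  = {x ∈ (U : Set (Fin (2 * k) → ZMod 2)) | qForm k (a + w0 + x) = 1}.ncard
                    + {x ∈ (U : Set (Fin (2 * k) → ZMod 2)) | qForm k (a + (w0 + w1) + x) = 1}.ncard := by
                rw [hWU, Set.image_union, image_add_add, image_add_add,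
                  Set.union_inter_distrib_right,
                  Set.ncard_union_eq (hdisjP (a + b + c) _) (Set.toFinite _) (Set.toFinite _),
                  p11a, p11b]
              have hB2S : (((a + w0) + ·) '' (M : Set (Fin (2 * k) → ZMod 2)) ∩ Sset k).ncard
                  = {x ∈ (U : Set (Fin (2 * k) → ZMod 2)) | qForm k (a + w0 + x) = 1}.ncard
                    + {x ∈ (U : Set (Fin (2 * k) → ZMod 2)) | qForm k (a + w0 + x) = 1}.ncard
                    + ({x ∈ (U : Set (Fin (2 * k) → ZMod 2)) | qForm k (a + w0 + x) = 1}.ncard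
                      + {x ∈ (U : Set (Fin (2 * k) → ZMod 2)) | qForm k (a + w0 + x) = 0}.ncard) := by
                rw [hMset, Set.image_union, Set.image_union, Set.image_union,
                  image_add_add, image_add_add, image_add_add,
                  Set.union_inter_distrib_right, Set.union_inter_distrib_right,
                  Set.union_inter_distrib_right]
                rw [Set.ncard_union_eq ?houter (Set.toFinite _) (Set.toFinite _),
                  Set.ncard_union_eq ?h12 (Set.toFinite _) (Set.toFinite _),
                  Set.ncard_union_eq ?h34 (Set.toFinite _) (Set.toFinite _),
                  p00a, pB2b, pB2c, pB2bc]
                case h12 =>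
                  refine hdisj2 _ _ ?_ _ _
                  intro hm
                  rw [show (a + w0) + (a + w0 + b) = b from by
                    linear_combination addself a + addself w0] at hm
                  exact hbU hm
                case h34 =>
                  refine hdisj2 _ _ ?_ _ _
                  intro hm
                  rw [show (a + w0 + c) + (a + w0 + (c + b)) = b from by
                    linear_combination addself a + addself w0 + addself c] at hm
                  exact hbU hm
                case houter =>
                  refine Set.disjoint_union_left.mpr ⟨?_, ?_⟩ <;>
                    refine Set.disjoint_union_right.mpr ⟨?_, ?_⟩
                  · refine hdisj2 _ _ ?_ _ _
                    intro hm
                    rw [show (a + w0) + (a + w0 + c) = c from by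
                      linear_combination addself a + addself w0] at hm
                    exact hcU hm
                  · refine hdisj2 _ _ ?_ _ _
                    intro hm
                    rw [show (a + w0) + (a + w0 + (c + b)) = c + b from by
                      linear_combination addself a + addself w0] at hm
                    exact hcbU hm
                  · refine hdisj2 _ _ ?_ _ _
                    intro hm
                    rw [show (a + w0 + b) + (a + w0 + c) = b + c from by
                      linear_combination addself a + addself w0] at hm
                    exact hbcU hm
                  · refine hdisj2 _ _ ?_ _ _
                    intro hm
                    rw [show (a + w0 + b) + (a + w0 + (c + b)) = c from by
                      linear_combination addself a + addself w0 + addself b] at hm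
                    exact hcU hm
              have hX : {x ∈ (U : Set (Fin (2 * k) → ZMod 2)) | qForm k (a + w0 + x) = 1}.ncard
                  + {x ∈ (U : Set (Fin (2 * k) → ZMod 2)) | qForm k (a + w0 + x) = 0}.ncard
                  = (U : Set (Fin (2 * k) → ZMod 2)).ncard := split_cnt _ _
              have hY : {x ∈ (U : Set (Fin (2 * k) → ZMod 2)) | qForm k (a + (w0 + w1) + x) = 1}.ncard
                  + {x ∈ (U : Set (Fin (2 * k) → ZMod 2)) | qForm k (a + (w0 + w1) + x) = 0}.ncard
                  = (U : Set (Fin (2 * k) → ZMod 2)).ncard := split_cnt _ _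
              rw [hA00, hA01, hA10, hA11, hB2S, Set.ncard_empty]
              omega
            · have hszW : (W : Set (Fin (2 * k) → ZMod 2)).ncard
                  = (U : Set (Fin (2 * k) → ZMod 2)).ncard
                    + (U : Set (Fin (2 * k) → ZMod 2)).ncard := by
                rw [hWU, Set.ncard_union_eq hdisjP0 (Set.toFinite _) (Set.toFinite _),
                  ncard_coset, ncard_coset]
              have hszB2 : (((a + w0) + ·) '' (M : Set (Fin (2 * k) → ZMod 2))).ncard
                  = 2 * (2 * (U : Set (Fin (2 * k) → ZMod 2)).ncard) := by
                rw [ncard_coset, hMdef, ncard_sup_span _ c hcUspb, ncard_sup_span U b hbU]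
              rw [Set.ncard_empty, hszB2, hszW]
              omega
          · -- block E : rank 2 case
            push_neg at hsame
            obtain ⟨w3, hw3W, hne3⟩ := hsame
            obtain ⟨v1, hv1W, hv1b, hv1c⟩ : ∃ v ∈ W, bb k v b = 1 ∧ bb k v c = 0 := by
              rcases z2 (bb k w3 b) with h3b | h3b <;> rcases z2 (bb k w3 c) with h3c | h3c
              · exact absurd (h3b.trans h3c.symm) hne3
              · rcases z2 (bb k w1 c) with h1c | h1c
                · exact ⟨w1, hw1W, hw1b, h1c⟩
                · exact ⟨w1 + w3, W.add_mem hw1W hw3W,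
                    by linear_combination bbadd w1 w3 b + hw1b + h3b,
                    by linear_combination bbadd w1 w3 c + h1c + h3c + h2zero⟩
              · exact ⟨w3, hw3W, h3b, h3c⟩
              · exact absurd (h3b.trans h3c.symm) hne3
            obtain ⟨v2, hv2W, hv2b, hv2c⟩ : ∃ v ∈ W, bb k v b = 0 ∧ bb k v c = 1 := by
              rcases z2 (bb k w3 b) with h3b | h3b <;> rcases z2 (bb k w3 c) with h3c | h3c
              · exact absurd (h3b.trans h3c.symm) hne3
              · exact ⟨w3, hw3W, h3b, h3c⟩
              · rcases z2 (bb k w2 b) with h2b | h2b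
                · exact ⟨w2, hw2W, h2b, hw2c⟩
                · exact ⟨w2 + w3, W.add_mem hw2W hw3W,
                    by linear_combination bbadd w2 w3 b + h2b + h3b + h2zero,
                    by linear_combination bbadd w2 w3 c + hw2c + h3c⟩
              · exact absurd (h3b.trans h3c.symm) hne3
            set U : Submodule (ZMod 2) (Fin (2 * k) → ZMod 2) :=
              (W ⊓ LinearMap.ker (lf k b)) ⊓ LinearMap.ker (lf k c) with hUdef
            have hUmem : ∀ x, x ∈ U ↔ x ∈ W ∧ bb k x b = 0 ∧ bb k x c = 0 := by
              intro x
              simp [hUdef, Submodule.mem_inf, LinearMap.mem_ker, lf_apply, and_assoc]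
            have hUW : ∀ x, x ∈ U → x ∈ W := fun x hx => ((hUmem x).mp hx).1
            have hbU : b ∉ U := fun h => hbW (hUW b h)
            have hcU : c ∉ U := fun h => hcW (hUW c h)
            have hbcU : b + c ∉ U := fun h => hbcW (hUW _ h)
            have hcbW : c + b ∉ W := by rw [add_comm]; exact hbcW
            have hcbU : c + b ∉ U := fun h => hcbW (hUW _ h)
            have hv1U : v1 ∉ U := by
              intro h
              have h' := ((hUmem v1).mp h).2.1
              rw [hv1b] at h'
              exact one_ne_zero h'
            have hv2U : v2 ∉ U := by
              intro h
              have h' := ((hUmem v2).mp h).2.2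
              rw [hv2c] at h'
              exact one_ne_zero h'
            have hv12U : v1 + v2 ∉ U := by
              intro h
              have h' := ((hUmem _).mp h).2.1
              rw [bbadd, hv1b, hv2b] at h'
              exact one_ne_zero (by linear_combination h')
            have hw0b' : qForm k (a + w0 + b) = qForm k (a + w0) := by
              have sh : a + w0 + b = a + b + w0 := by abel
              rw [sh]; exact hw0b
            have hw0c' : qForm k (a + w0 + c) = qForm k (a + w0) := by
              have sh : a + w0 + c = a + c + w0 := by abel
              rw [sh]; exact hw0c
            have hLab : qForm k (a + b) + qForm k a = bb k w0 b := by
              have s1 := shift b a w0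
              linear_combination hw0b' - s1 - bb k w0 b * h2zero
            have hLac : qForm k (a + c) + qForm k a = bb k w0 c := by
              have s1 := shift c a w0
              linear_combination hw0c' - s1 - bb k w0 c * h2zero
            have VB : ∀ d x : Fin (2 * k) → ZMod 2, qForm k (a + d + x + b)
                = qForm k (a + d + x) + (qForm k (a + b) + qForm k a + bb k d b + bb k x b) := by
              intro d x
              have s1 := shift b a (d + x)
              have sh1 : a + (d + x) + b = a + d + x + b := by abel
              have sh2 : a + (d + x) = a + d + x := by abel
              rw [sh1, sh2] at s1
              linear_combination s1 + bbadd d x b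
            have VC : ∀ d x : Fin (2 * k) → ZMod 2, qForm k (a + d + x + c)
                = qForm k (a + d + x) + (qForm k (a + c) + qForm k a + bb k d c + bb k x c) := by
              intro d x
              have s1 := shift c a (d + x)
              have sh1 : a + (d + x) + c = a + d + x + c := by abel
              have sh2 : a + (d + x) = a + d + x := by abel
              rw [sh1, sh2] at s1
              linear_combination s1 + bbadd d x c
            have VBC : ∀ d x : Fin (2 * k) → ZMod 2, qForm k (a + d + x + b + c)
                = qForm k (a + d + x) + (qForm k (a + b) + qForm k a + bb k d b + bb k x b)
                  + (qForm k (a + c) + qForm k a + bb k d c + bb k x c) + 1 := by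
              intro d x
              have q4 := quad4 (a + d + x) b c
              rw [hε1] at q4
              linear_combination q4 + VB d x + VC d x + (2 * qForm k (a + d + x)) * h2zero
            have val0b : ∀ x : Fin (2 * k) → ZMod 2, bb k x b = 0 →
                qForm k (a + w0 + x + b) = qForm k (a + w0 + x) := by
              intro x hxb
              linear_combination VB w0 x + hLab + hxb + bb k w0 b * h2zero
            have val0c : ∀ x : Fin (2 * k) → ZMod 2, bb k x c = 0 →
                qForm k (a + w0 + x + c) = qForm k (a + w0 + x) := by
              intro x hxc
              linear_combination VC w0 x + hLac + hxc + bb k w0 c * h2zero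
            have val0bc : ∀ x : Fin (2 * k) → ZMod 2, bb k x b = 0 → bb k x c = 0 →
                qForm k (a + w0 + x + b + c) = qForm k (a + w0 + x) + 1 := by
              intro x hxb hxc
              linear_combination VBC w0 x + hLab + hLac + hxb + hxc
                + (bb k w0 b + bb k w0 c) * h2zero
            have val1b : ∀ x : Fin (2 * k) → ZMod 2, bb k x b = 0 →
                qForm k (a + (w0 + v1) + x + b) = qForm k (a + (w0 + v1) + x) + 1 := by
              intro x hxb
              linear_combination VB (w0 + v1) x + bbadd w0 v1 b + hLab + hv1b + hxb
                + bb k w0 b * h2zero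
            have val1c : ∀ x : Fin (2 * k) → ZMod 2, bb k x c = 0 →
                qForm k (a + (w0 + v1) + x + c) = qForm k (a + (w0 + v1) + x) := by
              intro x hxc
              linear_combination VC (w0 + v1) x + bbadd w0 v1 c + hLac + hv1c + hxc
                + bb k w0 c * h2zero
            have val1bc : ∀ x : Fin (2 * k) → ZMod 2, bb k x b = 0 → bb k x c = 0 →
                qForm k (a + (w0 + v1) + x + b + c) = qForm k (a + (w0 + v1) + x) := by
              intro x hxb hxc
              linear_combination VBC (w0 + v1) x + bbadd w0 v1 b + bbadd w0 v1 c + hLab + hLac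
                + hv1b + hv1c + hxb + hxc + (bb k w0 b + bb k w0 c + 1) * h2zero
            have val2b : ∀ x : Fin (2 * k) → ZMod 2, bb k x b = 0 →
                qForm k (a + (w0 + v2) + x + b) = qForm k (a + (w0 + v2) + x) := by
              intro x hxb
              linear_combination VB (w0 + v2) x + bbadd w0 v2 b + hLab + hv2b + hxb
                + bb k w0 b * h2zero
            have val2c : ∀ x : Fin (2 * k) → ZMod 2, bb k x c = 0 →
                qForm k (a + (w0 + v2) + x + c) = qForm k (a + (w0 + v2) + x) + 1 := by
              intro x hxc
              linear_combination VC (w0 + v2) x + bbadd w0 v2 c + hLac + hv2c + hxc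
                + bb k w0 c * h2zero
            have val2bc : ∀ x : Fin (2 * k) → ZMod 2, bb k x b = 0 → bb k x c = 0 →
                qForm k (a + (w0 + v2) + x + b + c) = qForm k (a + (w0 + v2) + x) := by
              intro x hxb hxc
              linear_combination VBC (w0 + v2) x + bbadd w0 v2 b + bbadd w0 v2 c + hLab + hLac
                + hv2b + hv2c + hxb + hxc + (bb k w0 b + bb k w0 c + 1) * h2zero
            have val3b : ∀ x : Fin (2 * k) → ZMod 2, bb k x b = 0 →
                qForm k (a + (w0 + (v1 + v2)) + x + b) = qForm k (a + (w0 + (v1 + v2)) + x) + 1 := by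
              intro x hxb
              linear_combination VB (w0 + (v1 + v2)) x + bbadd w0 (v1 + v2) b + bbadd v1 v2 b
                + hLab + hv1b + hv2b + hxb + bb k w0 b * h2zero
            have val3c : ∀ x : Fin (2 * k) → ZMod 2, bb k x c = 0 →
                qForm k (a + (w0 + (v1 + v2)) + x + c) = qForm k (a + (w0 + (v1 + v2)) + x) + 1 := by
              intro x hxc
              linear_combination VC (w0 + (v1 + v2)) x + bbadd w0 (v1 + v2) c + bbadd v1 v2 c
                + hLac + hv1c + hv2c + hxc + bb k w0 c * h2zero
            have val3bc : ∀ x : Fin (2 * k) → ZMod 2, bb k x b = 0 → bb k x c = 0 →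
                qForm k (a + (w0 + (v1 + v2)) + x + b + c)
                  = qForm k (a + (w0 + (v1 + v2)) + x) + 1 := by
              intro x hxb hxc
              linear_combination VBC (w0 + (v1 + v2)) x + bbadd w0 (v1 + v2) b
                + bbadd w0 (v1 + v2) c + bbadd v1 v2 b + bbadd v1 v2 c + hLab + hLac
                + hv1b + hv1c + hv2b + hv2c + hxb + hxc
                + (bb k w0 b + bb k w0 c + 1) * h2zero
            -- partition of W into four cosets of U
            have hWU : (W : Set (Fin (2 * k) → ZMod 2))
                = (((w0 + ·) '' (U : Set (Fin (2 * k) → ZMod 2)))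
                    ∪ (((w0 + v1) + ·) '' (U : Set (Fin (2 * k) → ZMod 2))))
                  ∪ ((((w0 + v2) + ·) '' (U : Set (Fin (2 * k) → ZMod 2)))
                    ∪ (((w0 + (v1 + v2)) + ·) '' (U : Set (Fin (2 * k) → ZMod 2)))) := by
              ext x
              constructor
              · intro hx
                have hxW : x ∈ W := hx
                rcases z2 (bb k (w0 + x) b) with hb' | hb' <;>
                  rcases z2 (bb k (w0 + x) c) with hc' | hc'
                · refine Or.inl (Or.inl ⟨w0 + x, ?_, by linear_combination addself w0⟩)
                  refine (hUmem _).mpr ⟨W.add_mem hw0W hxW, ?_, ?_⟩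
                  · linear_combination hb'
                  · linear_combination hc'
                · refine Or.inr (Or.inl ⟨w0 + v2 + x, ?_,
                    by linear_combination addself w0 + addself v2⟩)
                  refine (hUmem _).mpr ⟨W.add_mem (W.add_mem hw0W hv2W) hxW, ?_, ?_⟩
                  · linear_combination bbadd (w0 + v2) x b + bbadd w0 v2 b - bbadd w0 x b
                      + hb' + hv2b
                  · linear_combination bbadd (w0 + v2) x c + bbadd w0 v2 c - bbadd w0 x c
                      + hc' + hv2c + h2zero
                · refine Or.inl (Or.inr ⟨w0 + v1 + x, ?_,
                    by linear_combination addself w0 + addself v1⟩)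
                  refine (hUmem _).mpr ⟨W.add_mem (W.add_mem hw0W hv1W) hxW, ?_, ?_⟩
                  · linear_combination bbadd (w0 + v1) x b + bbadd w0 v1 b - bbadd w0 x b
                      + hb' + hv1b + h2zero
                  · linear_combination bbadd (w0 + v1) x c + bbadd w0 v1 c - bbadd w0 x c
                      + hc' + hv1c
                · refine Or.inr (Or.inr ⟨w0 + (v1 + v2) + x, ?_,
                    by linear_combination addself w0 + addself v1 + addself v2⟩)
                  refine (hUmem _).mpr
                    ⟨W.add_mem (W.add_mem hw0W (W.add_mem hv1W hv2W)) hxW, ?_, ?_⟩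
                  · linear_combination bbadd (w0 + (v1 + v2)) x b + bbadd w0 (v1 + v2) b
                      + bbadd v1 v2 b - bbadd w0 x b + hb' + hv1b + hv2b + h2zero
                  · linear_combination bbadd (w0 + (v1 + v2)) x c + bbadd w0 (v1 + v2) c
                      + bbadd v1 v2 c - bbadd w0 x c + hc' + hv1c + hv2c + h2zero
              · rintro ((⟨u, hu, rfl⟩ | ⟨u, hu, rfl⟩) | (⟨u, hu, rfl⟩ | ⟨u, hu, rfl⟩))
                · exact W.add_mem hw0W (hUW u hu)
                · exact W.add_mem (W.add_mem hw0W hv1W) (hUW u hu)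
                · exact W.add_mem (W.add_mem hw0W hv2W) (hUW u hu)
                · exact W.add_mem (W.add_mem hw0W (W.add_mem hv1W hv2W)) (hUW u hu)
            have hdisj2 : ∀ (p q : Fin (2 * k) → ZMod 2), p + q ∉ U →
                ∀ T1 T2 : Set (Fin (2 * k) → ZMod 2),
                Disjoint ((p + ·) '' (U : Set (Fin (2 * k) → ZMod 2)) ∩ T1)
                  ((q + ·) '' (U : Set (Fin (2 * k) → ZMod 2)) ∩ T2) :=
              fun p q hpq T1 T2 => Set.disjoint_of_subset Set.inter_subset_left
                Set.inter_subset_left (coset_disj U hpq)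
            have hdA : ∀ (p : Fin (2 * k) → ZMod 2) (T : Set (Fin (2 * k) → ZMod 2)),
                Disjoint (((p + w0) + ·) '' (U : Set (Fin (2 * k) → ZMod 2)) ∩ T)
                  (((p + (w0 + v1)) + ·) '' (U : Set (Fin (2 * k) → ZMod 2)) ∩ T) := by
              intro p T
              refine hdisj2 _ _ ?_ T T
              intro hm
              rw [show (p + w0) + (p + (w0 + v1)) = v1 from by
                linear_combination addself p + addself w0] at hm
              exact hv1U hm
            have hdB : ∀ (p : Fin (2 * k) → ZMod 2) (T : Set (Fin (2 * k) → ZMod 2)),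
                Disjoint (((p + (w0 + v2)) + ·) '' (U : Set (Fin (2 * k) → ZMod 2)) ∩ T)
                  (((p + (w0 + (v1 + v2))) + ·) '' (U : Set (Fin (2 * k) → ZMod 2)) ∩ T) := by
              intro p T
              refine hdisj2 _ _ ?_ T T
              intro hm
              rw [show (p + (w0 + v2)) + (p + (w0 + (v1 + v2))) = v1 from by
                linear_combination addself p + addself w0 + addself v2] at hm
              exact hv1U hm
            have hdO : ∀ (p : Fin (2 * k) → ZMod 2) (T : Set (Fin (2 * k) → ZMod 2)),
                Disjoint
                  ((((p + w0) + ·) '' (U : Set (Fin (2 * k) → ZMod 2)) ∩ T)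
                    ∪ (((p + (w0 + v1)) + ·) '' (U : Set (Fin (2 * k) → ZMod 2)) ∩ T))
                  ((((p + (w0 + v2)) + ·) '' (U : Set (Fin (2 * k) → ZMod 2)) ∩ T)
                    ∪ (((p + (w0 + (v1 + v2))) + ·) '' (U : Set (Fin (2 * k) → ZMod 2)) ∩ T)) := by
              intro p T
              refine Set.disjoint_union_left.mpr ⟨?_, ?_⟩ <;>
                refine Set.disjoint_union_right.mpr ⟨?_, ?_⟩
              · refine hdisj2 _ _ ?_ T T
                intro hm
                rw [show (p + w0) + (p + (w0 + v2)) = v2 from by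
                  linear_combination addself p + addself w0] at hm
                exact hv2U hm
              · refine hdisj2 _ _ ?_ T T
                intro hm
                rw [show (p + w0) + (p + (w0 + (v1 + v2))) = v1 + v2 from by
                  linear_combination addself p + addself w0] at hm
                exact hv12U hm
              · refine hdisj2 _ _ ?_ T T
                intro hm
                rw [show (p + (w0 + v1)) + (p + (w0 + v2)) = v1 + v2 from by
                  linear_combination addself p + addself w0] at hm
                exact hv12U hm
              · refine hdisj2 _ _ ?_ T T
                intro hm
                rw [show (p + (w0 + v1)) + (p + (w0 + (v1 + v2))) = v2 from by
                  linear_combination addself p + addself w0 + addself v1] at hm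
                exact hv2U hm
            set M : Submodule (ZMod 2) (Fin (2 * k) → ZMod 2) :=
              (U ⊔ Submodule.span (ZMod 2) {b}) ⊔ Submodule.span (ZMod 2) {c} with hMdef
            have hcUspb : c ∉ U ⊔ Submodule.span (ZMod 2) {b} := by
              intro hmem
              have hmem' : c ∈ ((U ⊔ Submodule.span (ZMod 2) {b} : Submodule (ZMod 2) _) :
                  Set (Fin (2 * k) → ZMod 2)) := hmem
              rw [sup_span_set] at hmem'
              rcases hmem' with h | ⟨u, hu, heq⟩
              · exact hcU h
              · apply hbcW
                have he : u = b + c := by linear_combination heq - b * h2V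
                rw [← he]
                exact hUW u hu
            have hMset : (M : Set (Fin (2 * k) → ZMod 2))
                = ((U : Set (Fin (2 * k) → ZMod 2)) ∪ (b + ·) '' (U : Set (Fin (2 * k) → ZMod 2)))
                  ∪ ((c + ·) '' (U : Set (Fin (2 * k) → ZMod 2))
                    ∪ ((c + b) + ·) '' (U : Set (Fin (2 * k) → ZMod 2))) := by
              rw [hMdef, sup_span_set, sup_span_set, Set.image_union, image_add_add]
            have hv1M : v1 ∉ M := by
              intro hm
              have hm' : v1 ∈ (M : Set (Fin (2 * k) → ZMod 2)) := hm
              rw [hMset] at hm'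
              rcases hm' with (h | ⟨u, hu, heq⟩) | (⟨u, hu, heq⟩ | ⟨u, hu, heq⟩)
              · exact hv1U h
              · apply hbW
                have he : b = v1 + u := by linear_combination heq - u * h2V
                rw [he]
                exact W.add_mem hv1W (hUW u hu)
              · apply hcW
                have he : c = v1 + u := by linear_combination heq - u * h2V
                rw [he]
                exact W.add_mem hv1W (hUW u hu)
              · apply hcbW
                have he : c + b = v1 + u := by linear_combination heq - u * h2V
                rw [he]
                exact W.add_mem hv1W (hUW u hu)
            -- canonical piece computations
            have p00a : (((a + w0) + ·) '' (U : Set (Fin (2 * k) → ZMod 2)) ∩ Sset k).ncard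
                = {x ∈ (U : Set (Fin (2 * k) → ZMod 2)) | qForm k (a + w0 + x) = 1}.ncard :=
              piece _ _ _ _ (fun x _ => Iff.rfl)
            have p001 : (((a + (w0 + v1)) + ·) '' (U : Set (Fin (2 * k) → ZMod 2)) ∩ Sset k).ncard
                = {x ∈ (U : Set (Fin (2 * k) → ZMod 2)) | qForm k (a + (w0 + v1) + x) = 1}.ncard :=
              piece _ _ _ _ (fun x _ => Iff.rfl)
            have p002 : (((a + (w0 + v2)) + ·) '' (U : Set (Fin (2 * k) → ZMod 2)) ∩ Sset k).ncard
                = {x ∈ (U : Set (Fin (2 * k) → ZMod 2)) | qForm k (a + (w0 + v2) + x) = 1}.ncard :=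
              piece _ _ _ _ (fun x _ => Iff.rfl)
            have p003 : (((a + (w0 + (v1 + v2))) + ·) '' (U : Set (Fin (2 * k) → ZMod 2)) ∩ Sset k).ncard
                = {x ∈ (U : Set (Fin (2 * k) → ZMod 2)) |
                    qForm k (a + (w0 + (v1 + v2)) + x) = 1}.ncard :=
              piece _ _ _ _ (fun x _ => Iff.rfl)
            have p01a : (((a + b + w0) + ·) '' (U : Set (Fin (2 * k) → ZMod 2)) ∩ Sset k).ncard
                = {x ∈ (U : Set (Fin (2 * k) → ZMod 2)) | qForm k (a + w0 + x) = 1}.ncard := by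
              refine piece _ _ _ _ fun x hx => ?_
              obtain ⟨-, hxb, hxc⟩ := (hUmem x).mp hx
              show qForm k (a + b + w0 + x) = 1 ↔ _
              have sh : a + b + w0 + x = a + w0 + x + b := by abel
              rw [sh, val0b x hxb]
            have p011 : (((a + b + (w0 + v1)) + ·) '' (U : Set (Fin (2 * k) → ZMod 2)) ∩ Sset k).ncard
                = {x ∈ (U : Set (Fin (2 * k) → ZMod 2)) | qForm k (a + (w0 + v1) + x) = 0}.ncard := by
              refine piece _ _ _ _ fun x hx => ?_
              obtain ⟨-, hxb, hxc⟩ := (hUmem x).mp hx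
              show qForm k (a + b + (w0 + v1) + x) = 1 ↔ _
              have sh : a + b + (w0 + v1) + x = a + (w0 + v1) + x + b := by abel
              rw [sh, val1b x hxb]
              exact zflip1 _
            have p012 : (((a + b + (w0 + v2)) + ·) '' (U : Set (Fin (2 * k) → ZMod 2)) ∩ Sset k).ncard
                = {x ∈ (U : Set (Fin (2 * k) → ZMod 2)) | qForm k (a + (w0 + v2) + x) = 1}.ncard := by
              refine piece _ _ _ _ fun x hx => ?_
              obtain ⟨-, hxb, hxc⟩ := (hUmem x).mp hx
              show qForm k (a + b + (w0 + v2) + x) = 1 ↔ _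
              have sh : a + b + (w0 + v2) + x = a + (w0 + v2) + x + b := by abel
              rw [sh, val2b x hxb]
            have p013 : (((a + b + (w0 + (v1 + v2))) + ·) '' (U : Set (Fin (2 * k) → ZMod 2)) ∩ Sset k).ncard
                = {x ∈ (U : Set (Fin (2 * k) → ZMod 2)) |
                    qForm k (a + (w0 + (v1 + v2)) + x) = 0}.ncard := by
              refine piece _ _ _ _ fun x hx => ?_
              obtain ⟨-, hxb, hxc⟩ := (hUmem x).mp hx
              show qForm k (a + b + (w0 + (v1 + v2)) + x) = 1 ↔ _
              have sh : a + b + (w0 + (v1 + v2)) + x = a + (w0 + (v1 + v2)) + x + b := by abel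
              rw [sh, val3b x hxb]
              exact zflip1 _
            have p10a : (((a + c + w0) + ·) '' (U : Set (Fin (2 * k) → ZMod 2)) ∩ Sset k).ncard
                = {x ∈ (U : Set (Fin (2 * k) → ZMod 2)) | qForm k (a + w0 + x) = 1}.ncard := by
              refine piece _ _ _ _ fun x hx => ?_
              obtain ⟨-, hxb, hxc⟩ := (hUmem x).mp hx
              show qForm k (a + c + w0 + x) = 1 ↔ _
              have sh : a + c + w0 + x = a + w0 + x + c := by abel
              rw [sh, val0c x hxc]
            have p101 : (((a + c + (w0 + v1)) + ·) '' (U : Set (Fin (2 * k) → ZMod 2)) ∩ Sset k).ncard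
                = {x ∈ (U : Set (Fin (2 * k) → ZMod 2)) | qForm k (a + (w0 + v1) + x) = 1}.ncard := by
              refine piece _ _ _ _ fun x hx => ?_
              obtain ⟨-, hxb, hxc⟩ := (hUmem x).mp hx
              show qForm k (a + c + (w0 + v1) + x) = 1 ↔ _
              have sh : a + c + (w0 + v1) + x = a + (w0 + v1) + x + c := by abel
              rw [sh, val1c x hxc]
            have p102 : (((a + c + (w0 + v2)) + ·) '' (U : Set (Fin (2 * k) → ZMod 2)) ∩ Sset k).ncard
                = {x ∈ (U : Set (Fin (2 * k) → ZMod 2)) | qForm k (a + (w0 + v2) + x) = 0}.ncard := by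
              refine piece _ _ _ _ fun x hx => ?_
              obtain ⟨-, hxb, hxc⟩ := (hUmem x).mp hx
              show qForm k (a + c + (w0 + v2) + x) = 1 ↔ _
              have sh : a + c + (w0 + v2) + x = a + (w0 + v2) + x + c := by abel
              rw [sh, val2c x hxc]
              exact zflip1 _
            have p103 : (((a + c + (w0 + (v1 + v2))) + ·) '' (U : Set (Fin (2 * k) → ZMod 2)) ∩ Sset k).ncard
                = {x ∈ (U : Set (Fin (2 * k) → ZMod 2)) |
                    qForm k (a + (w0 + (v1 + v2)) + x) = 0}.ncard := by
              refine piece _ _ _ _ fun x hx => ?_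
              obtain ⟨-, hxb, hxc⟩ := (hUmem x).mp hx
              show qForm k (a + c + (w0 + (v1 + v2)) + x) = 1 ↔ _
              have sh : a + c + (w0 + (v1 + v2)) + x = a + (w0 + (v1 + v2)) + x + c := by abel
              rw [sh, val3c x hxc]
              exact zflip1 _
            have p11a : (((a + b + c + w0) + ·) '' (U : Set (Fin (2 * k) → ZMod 2)) ∩ Rset k).ncard
                = {x ∈ (U : Set (Fin (2 * k) → ZMod 2)) | qForm k (a + w0 + x) = 1}.ncard := by
              refine piece _ _ _ _ fun x hx => ?_
              obtain ⟨-, hxb, hxc⟩ := (hUmem x).mp hx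
              show qForm k (a + b + c + w0 + x) = 0 ↔ _
              have sh : a + b + c + w0 + x = a + w0 + x + b + c := by abel
              rw [sh, val0bc x hxb hxc]
              exact zflip0 _
            have p111 : (((a + b + c + (w0 + v1)) + ·) '' (U : Set (Fin (2 * k) → ZMod 2)) ∩ Rset k).ncard
                = {x ∈ (U : Set (Fin (2 * k) → ZMod 2)) | qForm k (a + (w0 + v1) + x) = 0}.ncard := by
              refine piece _ _ _ _ fun x hx => ?_
              obtain ⟨-, hxb, hxc⟩ := (hUmem x).mp hx
              show qForm k (a + b + c + (w0 + v1) + x) = 0 ↔ _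
              have sh : a + b + c + (w0 + v1) + x = a + (w0 + v1) + x + b + c := by abel
              rw [sh, val1bc x hxb hxc]
            have p112 : (((a + b + c + (w0 + v2)) + ·) '' (U : Set (Fin (2 * k) → ZMod 2)) ∩ Rset k).ncard
                = {x ∈ (U : Set (Fin (2 * k) → ZMod 2)) | qForm k (a + (w0 + v2) + x) = 0}.ncard := by
              refine piece _ _ _ _ fun x hx => ?_
              obtain ⟨-, hxb, hxc⟩ := (hUmem x).mp hx
              show qForm k (a + b + c + (w0 + v2) + x) = 0 ↔ _
              have sh : a + b + c + (w0 + v2) + x = a + (w0 + v2) + x + b + c := by abel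
              rw [sh, val2bc x hxb hxc]
            have p113 : (((a + b + c + (w0 + (v1 + v2))) + ·) '' (U : Set (Fin (2 * k) → ZMod 2)) ∩ Rset k).ncard
                = {x ∈ (U : Set (Fin (2 * k) → ZMod 2)) |
                    qForm k (a + (w0 + (v1 + v2)) + x) = 1}.ncard := by
              refine piece _ _ _ _ fun x hx => ?_
              obtain ⟨-, hxb, hxc⟩ := (hUmem x).mp hx
              show qForm k (a + b + c + (w0 + (v1 + v2)) + x) = 0 ↔ _
              have sh : a + b + c + (w0 + (v1 + v2)) + x
                  = a + (w0 + (v1 + v2)) + x + b + c := by abel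
              rw [sh, val3bc x hxb hxc]
              exact zflip0 _
            have pB2b : (((a + w0 + b) + ·) '' (U : Set (Fin (2 * k) → ZMod 2)) ∩ Sset k).ncard
                = {x ∈ (U : Set (Fin (2 * k) → ZMod 2)) | qForm k (a + w0 + x) = 1}.ncard := by
              refine piece _ _ _ _ fun x hx => ?_
              obtain ⟨-, hxb, hxc⟩ := (hUmem x).mp hx
              show qForm k (a + w0 + b + x) = 1 ↔ _
              have sh : a + w0 + b + x = a + w0 + x + b := by abel
              rw [sh, val0b x hxb]
            have pB2c : (((a + w0 + c) + ·) '' (U : Set (Fin (2 * k) → ZMod 2)) ∩ Sset k).ncard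
                = {x ∈ (U : Set (Fin (2 * k) → ZMod 2)) | qForm k (a + w0 + x) = 1}.ncard := by
              refine piece _ _ _ _ fun x hx => ?_
              obtain ⟨-, hxb, hxc⟩ := (hUmem x).mp hx
              show qForm k (a + w0 + c + x) = 1 ↔ _
              have sh : a + w0 + c + x = a + w0 + x + c := by abel
              rw [sh, val0c x hxc]
            have pB2bc : (((a + w0 + (c + b)) + ·) '' (U : Set (Fin (2 * k) → ZMod 2)) ∩ Sset k).ncard
                = {x ∈ (U : Set (Fin (2 * k) → ZMod 2)) | qForm k (a + w0 + x) = 0}.ncard := by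
              refine piece _ _ _ _ fun x hx => ?_
              obtain ⟨-, hxb, hxc⟩ := (hUmem x).mp hx
              show qForm k (a + w0 + (c + b) + x) = 1 ↔ _
              have sh : a + w0 + (c + b) + x = a + w0 + x + b + c := by abel
              rw [sh, val0bc x hxb hxc]
              exact zflip1 _
            refine ⟨((a + w0 + v1) + ·) '' (M : Set (Fin (2 * k) → ZMod 2)),
              ((a + w0) + ·) '' (M : Set (Fin (2 * k) → ZMod 2)), ?_,
              Or.inr ⟨a + w0 + v1, M, rfl⟩, Or.inr ⟨a + w0, M, rfl⟩, ?_, ?_⟩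
            · refine coset_disj M ?_
              intro hm
              rw [show (a + w0 + v1) + (a + w0) = v1 from by
                linear_combination addself a + addself w0] at hm
              exact hv1M hm
            · have hA00 : ((a + ·) '' (W : Set (Fin (2 * k) → ZMod 2)) ∩ Sset k).ncard
                  = ({x ∈ (U : Set (Fin (2 * k) → ZMod 2)) | qForm k (a + w0 + x) = 1}.ncard
                      + {x ∈ (U : Set (Fin (2 * k) → ZMod 2)) | qForm k (a + (w0 + v1) + x) = 1}.ncard)
                    + ({x ∈ (U : Set (Fin (2 * k) → ZMod 2)) | qForm k (a + (w0 + v2) + x) = 1}.ncard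
                      + {x ∈ (U : Set (Fin (2 * k) → ZMod 2)) |
                          qForm k (a + (w0 + (v1 + v2)) + x) = 1}.ncard) := by
                rw [hWU, Set.image_union, Set.image_union, Set.image_union,
                  image_add_add, image_add_add, image_add_add, image_add_add,
                  Set.union_inter_distrib_right, Set.union_inter_distrib_right,
                  Set.union_inter_distrib_right,
                  Set.ncard_union_eq (hdO a _) (Set.toFinite _) (Set.toFinite _),
                  Set.ncard_union_eq (hdA a _) (Set.toFinite _) (Set.toFinite _),
                  Set.ncard_union_eq (hdB a _) (Set.toFinite _) (Set.toFinite _),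
                  p00a, p001, p002, p003]
              have hA01 : ((a + b + ·) '' (W : Set (Fin (2 * k) → ZMod 2)) ∩ Sset k).ncard
                  = ({x ∈ (U : Set (Fin (2 * k) → ZMod 2)) | qForm k (a + w0 + x) = 1}.ncard
                      + {x ∈ (U : Set (Fin (2 * k) → ZMod 2)) | qForm k (a + (w0 + v1) + x) = 0}.ncard)
                    + ({x ∈ (U : Set (Fin (2 * k) → ZMod 2)) | qForm k (a + (w0 + v2) + x) = 1}.ncard
                      + {x ∈ (U : Set (Fin (2 * k) → ZMod 2)) |
                          qForm k (a + (w0 + (v1 + v2)) + x) = 0}.ncard) := by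
                rw [hWU, Set.image_union, Set.image_union, Set.image_union,
                  image_add_add, image_add_add, image_add_add, image_add_add,
                  Set.union_inter_distrib_right, Set.union_inter_distrib_right,
                  Set.union_inter_distrib_right,
                  Set.ncard_union_eq (hdO (a + b) _) (Set.toFinite _) (Set.toFinite _),
                  Set.ncard_union_eq (hdA (a + b) _) (Set.toFinite _) (Set.toFinite _),
                  Set.ncard_union_eq (hdB (a + b) _) (Set.toFinite _) (Set.toFinite _),
                  p01a, p011, p012, p013]
              have hA10 : ((a + c + ·) '' (W : Set (Fin (2 * k) → ZMod 2)) ∩ Sset k).ncard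
                  = ({x ∈ (U : Set (Fin (2 * k) → ZMod 2)) | qForm k (a + w0 + x) = 1}.ncard
                      + {x ∈ (U : Set (Fin (2 * k) → ZMod 2)) | qForm k (a + (w0 + v1) + x) = 1}.ncard)
                    + ({x ∈ (U : Set (Fin (2 * k) → ZMod 2)) | qForm k (a + (w0 + v2) + x) = 0}.ncard
                      + {x ∈ (U : Set (Fin (2 * k) → ZMod 2)) |
                          qForm k (a + (w0 + (v1 + v2)) + x) = 0}.ncard) := by
                rw [hWU, Set.image_union, Set.image_union, Set.image_union,
                  image_add_add, image_add_add, image_add_add, image_add_add,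
                  Set.union_inter_distrib_right, Set.union_inter_distrib_right,
                  Set.union_inter_distrib_right,
                  Set.ncard_union_eq (hdO (a + c) _) (Set.toFinite _) (Set.toFinite _),
                  Set.ncard_union_eq (hdA (a + c) _) (Set.toFinite _) (Set.toFinite _),
                  Set.ncard_union_eq (hdB (a + c) _) (Set.toFinite _) (Set.toFinite _),
                  p10a, p101, p102, p103]
              have hA11 : ((a + b + c + ·) '' (W : Set (Fin (2 * k) → ZMod 2)) ∩ Rset k).ncard
                  = ({x ∈ (U : Set (Fin (2 * k) → ZMod 2)) | qForm k (a + w0 + x) = 1}.ncard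
                      + {x ∈ (U : Set (Fin (2 * k) → ZMod 2)) | qForm k (a + (w0 + v1) + x) = 0}.ncard)
                    + ({x ∈ (U : Set (Fin (2 * k) → ZMod 2)) | qForm k (a + (w0 + v2) + x) = 0}.ncard
                      + {x ∈ (U : Set (Fin (2 * k) → ZMod 2)) |
                          qForm k (a + (w0 + (v1 + v2)) + x) = 1}.ncard) := by
                rw [hWU, Set.image_union, Set.image_union, Set.image_union,
                  image_add_add, image_add_add, image_add_add, image_add_add,
                  Set.union_inter_distrib_right, Set.union_inter_distrib_right,
                  Set.union_inter_distrib_right,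
                  Set.ncard_union_eq (hdO (a + b + c) _) (Set.toFinite _) (Set.toFinite _),
                  Set.ncard_union_eq (hdA (a + b + c) _) (Set.toFinite _) (Set.toFinite _),
                  Set.ncard_union_eq (hdB (a + b + c) _) (Set.toFinite _) (Set.toFinite _),
                  p11a, p111, p112, p113]
              have hB2S : (((a + w0) + ·) '' (M : Set (Fin (2 * k) → ZMod 2)) ∩ Sset k).ncard
                  = {x ∈ (U : Set (Fin (2 * k) → ZMod 2)) | qForm k (a + w0 + x) = 1}.ncard
                    + {x ∈ (U : Set (Fin (2 * k) → ZMod 2)) | qForm k (a + w0 + x) = 1}.ncard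
                    + ({x ∈ (U : Set (Fin (2 * k) → ZMod 2)) | qForm k (a + w0 + x) = 1}.ncard
                      + {x ∈ (U : Set (Fin (2 * k) → ZMod 2)) | qForm k (a + w0 + x) = 0}.ncard) := by
                rw [hMset, Set.image_union, Set.image_union, Set.image_union,
                  image_add_add, image_add_add, image_add_add,
                  Set.union_inter_distrib_right, Set.union_inter_distrib_right,
                  Set.union_inter_distrib_right]
                rw [Set.ncard_union_eq ?houter (Set.toFinite _) (Set.toFinite _),
                  Set.ncard_union_eq ?h12 (Set.toFinite _) (Set.toFinite _),
                  Set.ncard_union_eq ?h34 (Set.toFinite _) (Set.toFinite _),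
                  p00a, pB2b, pB2c, pB2bc]
                case h12 =>
                  refine hdisj2 _ _ ?_ _ _
                  intro hm
                  rw [show (a + w0) + (a + w0 + b) = b from by
                    linear_combination addself a + addself w0] at hm
                  exact hbU hm
                case h34 =>
                  refine hdisj2 _ _ ?_ _ _
                  intro hm
                  rw [show (a + w0 + c) + (a + w0 + (c + b)) = b from by
                    linear_combination addself a + addself w0 + addself c] at hm
                  exact hbU hm
                case houter =>
                  refine Set.disjoint_union_left.mpr ⟨?_, ?_⟩ <;>
                    refine Set.disjoint_union_right.mpr ⟨?_, ?_⟩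
                  · refine hdisj2 _ _ ?_ _ _
                    intro hm
                    rw [show (a + w0) + (a + w0 + c) = c from by
                      linear_combination addself a + addself w0] at hm
                    exact hcU hm
                  · refine hdisj2 _ _ ?_ _ _
                    intro hm
                    rw [show (a + w0) + (a + w0 + (c + b)) = c + b from by
                      linear_combination addself a + addself w0] at hm
                    exact hcbU hm
                  · refine hdisj2 _ _ ?_ _ _
                    intro hm
                    rw [show (a + w0 + b) + (a + w0 + c) = b + c from by
                      linear_combination addself a + addself w0] at hm
                    exact hbcU hm
                  · refine hdisj2 _ _ ?_ _ _
                    intro hm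
                    rw [show (a + w0 + b) + (a + w0 + (c + b)) = c from by
                      linear_combination addself a + addself w0 + addself b] at hm
                    exact hcU hm
              have hB1sz : (((a + w0 + v1) + ·) '' (M : Set (Fin (2 * k) → ZMod 2))).ncard
                  = 2 * (2 * (U : Set (Fin (2 * k) → ZMod 2)).ncard) := by
                rw [ncard_coset, hMdef, ncard_sup_span _ c hcUspb, ncard_sup_span U b hbU]
              have hX : {x ∈ (U : Set (Fin (2 * k) → ZMod 2)) | qForm k (a + w0 + x) = 1}.ncard
                  + {x ∈ (U : Set (Fin (2 * k) → ZMod 2)) | qForm k (a + w0 + x) = 0}.ncard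
                  = (U : Set (Fin (2 * k) → ZMod 2)).ncard := split_cnt _ _
              have hY : {x ∈ (U : Set (Fin (2 * k) → ZMod 2)) | qForm k (a + (w0 + v1) + x) = 1}.ncard
                  + {x ∈ (U : Set (Fin (2 * k) → ZMod 2)) | qForm k (a + (w0 + v1) + x) = 0}.ncard
                  = (U : Set (Fin (2 * k) → ZMod 2)).ncard := split_cnt _ _
              have hZ : {x ∈ (U : Set (Fin (2 * k) → ZMod 2)) | qForm k (a + (w0 + v2) + x) = 1}.ncard
                  + {x ∈ (U : Set (Fin (2 * k) → ZMod 2)) | qForm k (a + (w0 + v2) + x) = 0}.ncard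
                  = (U : Set (Fin (2 * k) → ZMod 2)).ncard := split_cnt _ _
              have hT : {x ∈ (U : Set (Fin (2 * k) → ZMod 2)) |
                    qForm k (a + (w0 + (v1 + v2)) + x) = 1}.ncard
                  + {x ∈ (U : Set (Fin (2 * k) → ZMod 2)) |
                    qForm k (a + (w0 + (v1 + v2)) + x) = 0}.ncard
                  = (U : Set (Fin (2 * k) → ZMod 2)).ncard := split_cnt _ _
              rw [hA00, hA01, hA10, hA11, hB2S, hB1sz]
              omega
            · have hd0A : Disjoint ((w0 + ·) '' (U : Set (Fin (2 * k) → ZMod 2)))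
                  (((w0 + v1) + ·) '' (U : Set (Fin (2 * k) → ZMod 2))) := by
                refine coset_disj U ?_
                intro hm
                rw [show w0 + (w0 + v1) = v1 from by linear_combination addself w0] at hm
                exact hv1U hm
              have hd0B : Disjoint (((w0 + v2) + ·) '' (U : Set (Fin (2 * k) → ZMod 2)))
                  (((w0 + (v1 + v2)) + ·) '' (U : Set (Fin (2 * k) → ZMod 2))) := by
                refine coset_disj U ?_
                intro hm
                rw [show (w0 + v2) + (w0 + (v1 + v2)) = v1 from by
                  linear_combination addself w0 + addself v2] at hm
                exact hv1U hm
              have hd0O : Disjoint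
                  (((w0 + ·) '' (U : Set (Fin (2 * k) → ZMod 2)))
                    ∪ (((w0 + v1) + ·) '' (U : Set (Fin (2 * k) → ZMod 2))))
                  ((((w0 + v2) + ·) '' (U : Set (Fin (2 * k) → ZMod 2)))
                    ∪ (((w0 + (v1 + v2)) + ·) '' (U : Set (Fin (2 * k) → ZMod 2)))) := by
                refine Set.disjoint_union_left.mpr ⟨?_, ?_⟩ <;>
                  refine Set.disjoint_union_right.mpr ⟨?_, ?_⟩
                · refine coset_disj U ?_
                  intro hm
                  rw [show w0 + (w0 + v2) = v2 from by linear_combination addself w0] at hm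
                  exact hv2U hm
                · refine coset_disj U ?_
                  intro hm
                  rw [show w0 + (w0 + (v1 + v2)) = v1 + v2 from by
                    linear_combination addself w0] at hm
                  exact hv12U hm
                · refine coset_disj U ?_
                  intro hm
                  rw [show (w0 + v1) + (w0 + v2) = v1 + v2 from by
                    linear_combination addself w0] at hm
                  exact hv12U hm
                · refine coset_disj U ?_
                  intro hm
                  rw [show (w0 + v1) + (w0 + (v1 + v2)) = v2 from by
                    linear_combination addself w0 + addself v1] at hm
                  exact hv2U hm
              have hszW : (W : Set (Fin (2 * k) → ZMod 2)).ncard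
                  = ((U : Set (Fin (2 * k) → ZMod 2)).ncard
                      + (U : Set (Fin (2 * k) → ZMod 2)).ncard)
                    + ((U : Set (Fin (2 * k) → ZMod 2)).ncard
                      + (U : Set (Fin (2 * k) → ZMod 2)).ncard) := by
                rw [hWU, Set.ncard_union_eq hd0O (Set.toFinite _) (Set.toFinite _),
                  Set.ncard_union_eq hd0A (Set.toFinite _) (Set.toFinite _),
                  Set.ncard_union_eq hd0B (Set.toFinite _) (Set.toFinite _),
                  ncard_coset, ncard_coset, ncard_coset, ncard_coset]
              have hszB1 : (((a + w0 + v1) + ·) '' (M : Set (Fin (2 * k) → ZMod 2))).ncard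
                  = 2 * (2 * (U : Set (Fin (2 * k) → ZMod 2)).ncard) := by
                rw [ncard_coset, hMdef, ncard_sup_span _ c hcUspb, ncard_sup_span U b hbU]
              have hszB2 : (((a + w0) + ·) '' (M : Set (Fin (2 * k) → ZMod 2))).ncard
                  = 2 * (2 * (U : Set (Fin (2 * k) → ZMod 2)).ncard) := by
                rw [ncard_coset, hMdef, ncard_sup_span _ c hcUspb, ncard_sup_span U b hbU]
              rw [hszB1, hszB2, hszW]
              omega
    · -- block B : E = ∅
      refine ⟨(a + ·) '' ((W ⊔ Submodule.span (ZMod 2) {b} : Submodule (ZMod 2) _) : Set _), ∅,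
        by simp, Or.inr ⟨a, W ⊔ Submodule.span (ZMod 2) {b}, rfl⟩, Or.inl rfl, ?_, ?_⟩
      · have hB1 : ((a + ·) '' ((W ⊔ Submodule.span (ZMod 2) {b} : Submodule (ZMod 2) _) : Set _)).ncard
            = 2 * ((W : Set (Fin (2*k) → ZMod 2))).ncard := by
          rw [ncard_coset, ncard_sup_span W b hbW]
        rw [Set.empty_inter, Set.ncard_empty, mul_zero, add_zero, hB1,
          cnt_sum _ _ _ (injadd _), cnt_sum _ _ _ (injadd _), cnt_sum _ _ _ (injadd _),
          cnt_sum _ _ _ (injadd _), ← Finset.sum_add_distrib, ← Finset.sum_add_distrib,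
          ← Finset.sum_add_distrib]
        have keyB : ∀ w ∈ (Set.toFinite ((W : Set (Fin (2*k) → ZMod 2)))).toFinset,
            ((if a + w ∈ Sset k then 1 else 0) + (if a + b + w ∈ Sset k then 1 else 0)
              + (if a + c + w ∈ Sset k then 1 else 0)
              + (if a + b + c + w ∈ Rset k then 1 else 0) : ℕ) = 2 := by
          intro w hwF
          have hw : w ∈ W := by
            have := (Set.Finite.mem_toFinset _).mp hwF
            simpa using this
          have e1 : a + b + w = a + w + b := by abel
          have e2 : a + c + w = a + w + c := by abel
          have e3 : a + b + c + w = a + w + b + c := by abel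
          have hq4 := quad4 (a + w) b c
          rw [hε1] at hq4
          have hne : qForm k (a + w + b) = qForm k (a + w) →
              qForm k (a + w + c) = qForm k (a + w) → False := fun u1 u2 =>
            hE ⟨w, hw, by rw [e1]; exact u1, by rw [e2]; exact u2⟩
          simp only [Sset, Rset, Set.mem_setOf_eq, e1, e2, e3]
          rcases z2 (qForm k (a + w)) with h1 | h1 <;>
            rcases z2 (qForm k (a + w + b)) with h2 | h2 <;>
            rcases z2 (qForm k (a + w + c)) with h3 | h3 <;>
            rcases z2 (qForm k (a + w + b + c)) with h4 | h4 <;>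
            rw [h1, h2, h3, h4] at hq4 <;>
            first
              | exact absurd hq4 (by decide)
              | exact (hne (h2.trans h1.symm) (h3.trans h1.symm)).elim
              | simp [h1, h2, h3, h4]
        rw [Finset.sum_congr rfl keyB, Finset.sum_const, smul_eq_mul,
          ncard_eq_card_toFinset (W : Set (Fin (2*k) → ZMod 2))]
        ring
      · rw [Set.ncard_empty, ncard_coset, ncard_sup_span W b hbW]
        ring
end

section
/- Let e and k > 1 be positive integers. Suppose that |B ∩ S_{k-1}| ≤ 2^{dim B - 1} + 2^{k-3} for every affine subspace B of 𝔽₂^{2k-2} with dim B ∈ {e, e+1}. Then |A₀₀ ∩ S_{k-1}| + |A₀₁ ∩ S_{k-1}| + |A₁₀ ∩ S_{k-1}| + |A₁₁ ∩ R_{k-1}| ≤ 2^{e+1} + 2^{k-2} for any four pairwise disjoint affine subspaces of the form A₀₀ = a + W, A₀₁ = a + b + W, A₁₀ = a + c + W, A₁₁ = a + b + c + W, where a, b, c ∈ 𝔽₂^{2k-2} and W is an e-dimensional linear subspace of 𝔽₂^{2k-2}. -/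
/-- `A` is an affine subspace of dimension `d`: a translate `a + W` of a linear
subspace `W` with `dim W = d`. -/
def IsAffineOfDim {V : Type*} [AddCommGroup V] [Module (ZMod 2) V]
    (A : Set V) (d : ℕ) : Prop :=
  ∃ (a : V) (W : Submodule (ZMod 2) V),
    Module.finrank (ZMod 2) W = d ∧ A = (a + ·) '' (W : Set V)

namespace Stmt8

open scoped Classical

variable {m : ℕ}

def ι1 (m : ℕ) (i : Fin m) : Fin (2 * m) := ⟨i.1, by have := i.2; omega⟩
def ι2 (m : ℕ) (i : Fin m) : Fin (2 * m) := ⟨m + i.1, by have := i.2; omega⟩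

def Bform (m : ℕ) (x y : Fin (2 * m) → ZMod 2) : ZMod 2 :=
  ∑ i : Fin m, (x (ι1 m i) * y (ι2 m i) + x (ι2 m i) * y (ι1 m i))

lemma qForm_eq (x : Fin (2 * m) → ZMod 2) :
    qForm m x = ∑ i : Fin m, x (ι1 m i) * x (ι2 m i) := rfl

lemma zmod2_add_self' : ∀ z : ZMod 2, z + z = 0 := by decide
lemma zmod2_add_self (z : ZMod 2) : z + z = 0 := zmod2_add_self' z

lemma vadd_self (x : Fin (2 * m) → ZMod 2) : x + x = 0 := by
  funext i; exact zmod2_add_self (x i)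

lemma qForm_add (x y : Fin (2 * m) → ZMod 2) :
    qForm m (x + y) = qForm m x + qForm m y + Bform m x y := by
  simp only [qForm_eq, Bform, Pi.add_apply, ← Finset.sum_add_distrib]
  exact Finset.sum_congr rfl (by intros; ring)

lemma Bform_symm (x y : Fin (2 * m) → ZMod 2) : Bform m x y = Bform m y x := by
  unfold Bform; exact Finset.sum_congr rfl (by intros; ring)

lemma Bform_add_left (x y z : Fin (2 * m) → ZMod 2) :
    Bform m (x + y) z = Bform m x z + Bform m y z := by
  simp only [Bform, Pi.add_apply, ← Finset.sum_add_distrib]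
  exact Finset.sum_congr rfl (by intros; ring)

lemma Bform_add_right (x y z : Fin (2 * m) → ZMod 2) :
    Bform m x (y + z) = Bform m x y + Bform m x z := by
  rw [Bform_symm, Bform_add_left, Bform_symm y x, Bform_symm z x]

lemma Bform_smul_left (c : ZMod 2) (x y : Fin (2 * m) → ZMod 2) :
    Bform m (c • x) y = c • Bform m x y := by
  simp only [Bform, Pi.smul_apply, smul_eq_mul, Finset.mul_sum]
  exact Finset.sum_congr rfl (by intros; ring)

def Bl (m : ℕ) : LinearMap.BilinForm (ZMod 2) (Fin (2 * m) → ZMod 2) :=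
  LinearMap.mk₂ (ZMod 2) (Bform m) Bform_add_left Bform_smul_left
    Bform_add_right (fun c x y => by
      rw [Bform_symm, Bform_smul_left, Bform_symm y x])

@[simp] lemma Bl_apply (x y : Fin (2 * m) → ZMod 2) : Bl m x y = Bform m x y := rfl

def sing (m : ℕ) (j : Fin (2 * m)) : Fin (2 * m) → ZMod 2 := Pi.single j 1

lemma sing_eq_same (j : Fin (2 * m)) : sing m j j = 1 := Pi.single_eq_same _ _
lemma sing_eq_of_ne {j j' : Fin (2 * m)} (h : j' ≠ j) : sing m j j' = 0 := Pi.single_eq_of_ne h _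

lemma Bform_single2 (x : Fin (2 * m) → ZMod 2) (i : Fin m) :
    Bform m x (sing m (ι2 m i)) = x (ι1 m i) := by
  unfold Bform
  rw [Finset.sum_eq_single i]
  · have h1 : sing m (ι2 m i) (ι2 m i) = 1 :=
      sing_eq_same _
    have h2 : sing m (ι2 m i) (ι1 m i) = 0 := by
      apply sing_eq_of_ne
      have := i.2; simp [ι1, ι2, Fin.ext_iff]; omega
    rw [h1, h2]; ring
  · intro j _ hj
    have h1 : sing m (ι2 m i) (ι2 m j) = 0 := by
      apply sing_eq_of_ne
      simp only [ι2, Fin.ext_iff, ne_eq]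
      intro h; exact hj (Fin.ext (by omega)).symm
    have h2 : sing m (ι2 m i) (ι1 m j) = 0 := by
      apply sing_eq_of_ne
      have := j.2; simp [ι1, ι2, Fin.ext_iff]; omega
    rw [h1, h2]; ring
  · intro h; exact absurd (Finset.mem_univ i) h

lemma Bform_single1 (x : Fin (2 * m) → ZMod 2) (i : Fin m) :
    Bform m x (sing m (ι1 m i)) = x (ι2 m i) := by
  unfold Bform
  rw [Finset.sum_eq_single i]
  · have h1 : sing m (ι1 m i) (ι1 m i) = 1 :=
      sing_eq_same _
    have h2 : sing m (ι1 m i) (ι2 m i) = 0 := by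
      apply sing_eq_of_ne
      have := i.2; simp [ι1, ι2, Fin.ext_iff]; omega
    rw [h1, h2]; ring
  · intro j _ hj
    have h1 : sing m (ι1 m i) (ι2 m j) = 0 := by
      apply sing_eq_of_ne
      have := i.2; simp [ι1, ι2, Fin.ext_iff]; omega
    have h2 : sing m (ι1 m i) (ι1 m j) = 0 := by
      apply sing_eq_of_ne
      simp only [ι1, Fin.ext_iff, ne_eq]
      intro h; exact hj (Fin.ext (by omega)).symm
    rw [h1, h2]; ring
  · intro h; exact absurd (Finset.mem_univ i) h

lemma Bl_nondeg : (Bl m).Nondegenerate := by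
  refine (LinearMap.IsRefl.nondegenerate_iff_separatingLeft (B := Bl m)
    (fun x y h => by rw [Bl_apply] at h ⊢; rw [Bform_symm]; exact h)).mpr ?_
  intro x hx
  funext j
  rcases lt_or_ge j.1 m with h | h
  · have := hx (sing m (ι2 m ⟨j.1, h⟩))
    rw [Bl_apply, Bform_single2] at this
    simpa [ι1] using this
  · have hj : j.1 - m < m := by have := j.2; omega
    have := hx (sing m (ι1 m ⟨j.1 - m, hj⟩))
    rw [Bl_apply, Bform_single1] at this
    have hje : ι2 m ⟨j.1 - m, hj⟩ = j := by
      simp only [ι2, Fin.ext_iff]; omega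
    rwa [hje] at this

lemma Bl_refl : (Bl m).IsRefl := by
  intro x y h
  rw [Bl_apply] at h ⊢
  rw [Bform_symm]; exact h


variable {m : ℕ}

lemma zmod2_cases : ∀ c : ZMod 2, c = 0 ∨ c = 1 := by decide
lemma zmod2_ne_one : ∀ c : ZMod 2, ¬ c = 1 ↔ c = 0 := by decide

noncomputable def cnt (m : ℕ) (W : Submodule (ZMod 2) (Fin (2 * m) → ZMod 2))
    (t : Fin (2 * m) → ZMod 2) : ℕ :=
  ((W : Set _).toFinset.filter (fun w => qForm m (t + w) = 1)).card

noncomputable def cnt0 (m : ℕ) (W : Submodule (ZMod 2) (Fin (2 * m) → ZMod 2))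
    (t : Fin (2 * m) → ZMod 2) : ℕ :=
  ((W : Set _).toFinset.filter (fun w => qForm m (t + w) = 0)).card

lemma ncardS (U : Submodule (ZMod 2) (Fin (2 * m) → ZMod 2)) (t : Fin (2 * m) → ZMod 2) :
    (((t + ·) '' (U : Set _)) ∩ Sset m).ncard = cnt m U t := by
  have h1 : ((t + ·) '' (U : Set _)) ∩ Sset m = (t + ·) '' ((U : Set _) ∩ (t + ·) ⁻¹' Sset m) :=
    (Set.image_inter_preimage _ _ _).symm
  have h2 : (U : Set _) ∩ (t + ·) ⁻¹' Sset m
      = ↑((U : Set _).toFinset.filter (fun w => qForm m (t + w) = 1)) := by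
    ext w
    simp [Sset, Set.mem_toFinset]
  rw [h1, Set.ncard_image_of_injective _ (add_right_injective t), h2, Set.ncard_coe_finset]
  rfl

lemma ncardR (U : Submodule (ZMod 2) (Fin (2 * m) → ZMod 2)) (t : Fin (2 * m) → ZMod 2) :
    (((t + ·) '' (U : Set _)) ∩ Rset m).ncard = cnt0 m U t := by
  have h1 : ((t + ·) '' (U : Set _)) ∩ Rset m = (t + ·) '' ((U : Set _) ∩ (t + ·) ⁻¹' Rset m) :=
    (Set.image_inter_preimage _ _ _).symm
  have h2 : (U : Set _) ∩ (t + ·) ⁻¹' Rset m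
      = ↑((U : Set _).toFinset.filter (fun w => qForm m (t + w) = 0)) := by
    ext w
    simp [Rset, Set.mem_toFinset]
  rw [h1, Set.ncard_image_of_injective _ (add_right_injective t), h2, Set.ncard_coe_finset]
  rfl

lemma toFinset_card_subm (U : Submodule (ZMod 2) (Fin (2 * m) → ZMod 2)) :
    (U : Set (Fin (2 * m) → ZMod 2)).toFinset.card = 2 ^ Module.finrank (ZMod 2) U := by
  rw [Set.toFinset_card, ← Nat.card_eq_fintype_card]
  have h : Nat.card ↥(U : Set (Fin (2 * m) → ZMod 2)) = Nat.card ↥U := rfl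
  rw [h, Nat.card_eq_fintype_card, Module.card_eq_pow_finrank (K := ZMod 2), ZMod.card]

lemma cnt_add_cnt0 (W : Submodule (ZMod 2) (Fin (2 * m) → ZMod 2)) (t : Fin (2 * m) → ZMod 2) :
    cnt m W t + cnt0 m W t = 2 ^ Module.finrank (ZMod 2) W := by
  have key := Finset.card_filter_add_card_filter_not
    (s := ((W : Set (Fin (2 * m) → ZMod 2)).toFinset)) (p := fun w => qForm m (t + w) = 1)
  rw [← toFinset_card_subm W, ← key]
  unfold cnt cnt0
  congr 1
  apply congrArg
  apply Finset.filter_congr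
  intro w _
  simp [← zmod2_ne_one]

lemma cnt_shift {W : Submodule (ZMod 2) (Fin (2 * m) → ZMod 2)} {w₀ : Fin (2 * m) → ZMod 2}
    (hw : w₀ ∈ W) (t : Fin (2 * m) → ZMod 2) : cnt m W (t + w₀) = cnt m W t := by
  apply Finset.card_bij' (fun w _ => w₀ + w) (fun w _ => w₀ + w)
  · intro w hw'
    simp only [Finset.mem_filter, Set.mem_toFinset, SetLike.mem_coe] at hw' ⊢
    refine ⟨W.add_mem hw hw'.1, ?_⟩
    rw [show t + (w₀ + w) = t + w₀ + w by rw [add_assoc]]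
    exact hw'.2
  · intro w hw'
    simp only [Finset.mem_filter, Set.mem_toFinset, SetLike.mem_coe] at hw' ⊢
    refine ⟨W.add_mem hw hw'.1, ?_⟩
    rw [show t + w₀ + (w₀ + w) = t + ((w₀ + w₀) + w) by abel, vadd_self w₀, zero_add]
    exact hw'.2
  · intro w _
    rw [← add_assoc, vadd_self w₀, zero_add]
  · intro w _
    rw [← add_assoc, vadd_self w₀, zero_add]

lemma coset_union {W : Submodule (ZMod 2) (Fin (2 * m) → ZMod 2)}
    {v : Fin (2 * m) → ZMod 2} (hv : v ∉ W) :
    ((W ⊔ Submodule.span (ZMod 2) {v} : Submodule (ZMod 2) _) : Set _)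
      = (W : Set _) ∪ (v + ·) '' (W : Set _) := by
  ext x
  simp only [Set.mem_union, SetLike.mem_coe, Set.mem_image]
  constructor
  · intro hx
    rcases Submodule.mem_sup.mp hx with ⟨w, hw, s, hs, rfl⟩
    rcases Submodule.mem_span_singleton.mp hs with ⟨c, rfl⟩
    rcases zmod2_cases c with rfl | rfl
    · left; simpa using hw
    · right; exact ⟨w, hw, by rw [one_smul, add_comm]⟩
  · rintro (hx | ⟨w, hw, rfl⟩)
    · exact Submodule.mem_sup_left hx
    · rw [add_comm]
      exact Submodule.add_mem _ (Submodule.mem_sup_left hw)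
        (Submodule.mem_sup_right (Submodule.mem_span_singleton_self v))

lemma coset_disj {W : Submodule (ZMod 2) (Fin (2 * m) → ZMod 2)}
    {v : Fin (2 * m) → ZMod 2} (hv : v ∉ W) (t : Fin (2 * m) → ZMod 2) :
    Disjoint ((t + ·) '' (W : Set _)) ((t + v + ·) '' (W : Set _)) := by
  rw [Set.disjoint_left]
  rintro x ⟨w, hw, rfl⟩ ⟨w', hw', hx⟩
  apply hv
  have : v = w + w' := by
    have h2 : t + (v + w') = t + w := by rw [← add_assoc]; exact hx
    have h3 : v + w' = w := add_left_cancel h2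
    have h4 := congrArg (fun z => z + w') h3
    rwa [add_assoc, vadd_self, add_zero] at h4
  rw [this]
  exact W.add_mem hw hw'

lemma ncardS_union {W : Submodule (ZMod 2) (Fin (2 * m) → ZMod 2)}
    {v : Fin (2 * m) → ZMod 2} (hv : v ∉ W) (t : Fin (2 * m) → ZMod 2) :
    (((t + ·) '' ((W ⊔ Submodule.span (ZMod 2) {v} : Submodule (ZMod 2) _) : Set _)) ∩ Sset m).ncard
      = cnt m W t + cnt m W (t + v) := by
  rw [coset_union hv, Set.image_union, Set.union_inter_distrib_right]
  rw [Set.image_image (fun x => t + x) (fun x => v + x)]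
  have himg : (fun w => t + (v + w)) = (fun w => t + v + w) := by
    funext w; rw [add_assoc]
  rw [himg]
  rw [Set.ncard_union_eq ?hdisj (Set.toFinite _) (Set.toFinite _)]
  · rw [ncardS W t, ncardS W (t + v)]
  case hdisj =>
    exact Set.disjoint_of_subset Set.inter_subset_left Set.inter_subset_left (coset_disj hv t)

lemma finrank_sup_span {W : Submodule (ZMod 2) (Fin (2 * m) → ZMod 2)}
    {v : Fin (2 * m) → ZMod 2} (hv : v ∉ W) :
    Module.finrank (ZMod 2) ↥(W ⊔ Submodule.span (ZMod 2) {v})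
      = Module.finrank (ZMod 2) W + 1 := by
  have h0 : v ≠ 0 := fun h => hv (h ▸ W.zero_mem)
  have hinf : W ⊓ Submodule.span (ZMod 2) {v} = ⊥ := by
    rw [eq_bot_iff]
    rintro x hx
    rcases Submodule.mem_inf.mp hx with ⟨hxW, hxv⟩
    rcases Submodule.mem_span_singleton.mp hxv with ⟨c, rfl⟩
    rcases zmod2_cases c with rfl | rfl
    · simp
    · rw [one_smul] at hxW; exact absurd hxW hv
  have h := Submodule.finrank_sup_add_finrank_inf_eq W (Submodule.span (ZMod 2) {v})
  rw [hinf, finrank_bot, add_zero, finrank_span_singleton h0] at h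
  exact h


def chi (z : ZMod 2) : ℤ := 1 - 2 * z.val

lemma chi_add : ∀ z w : ZMod 2, chi (z + w) = chi z * chi w := by decide
lemma chi_zero : chi 0 = 1 := by decide
lemma chi_one : chi 1 = -1 := by decide
lemma chi_val : ∀ z : ZMod 2, chi z = 1 - 2 * (if z = 1 then (1 : ℤ) else 0) := by decide
lemma zmod2_ne_zero : ∀ c : ZMod 2, ¬ c = 0 → c = 1 := by decide
lemma zmod2_add_one : ∀ z : ZMod 2, z + 1 = 1 ↔ z = 0 := by decide

lemma sum_transl' {s : Finset (Fin (2 * m) → ZMod 2)} {w₀ : Fin (2 * m) → ZMod 2}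
    (hs : ∀ x ∈ s, w₀ + x ∈ s) (g : (Fin (2 * m) → ZMod 2) → ℤ) :
    ∑ w ∈ s, g (w₀ + w) = ∑ w ∈ s, g w := by
  apply Finset.sum_nbij' (i := fun w => w₀ + w) (j := fun w => w₀ + w)
  · exact hs
  · exact hs
  · intro w _; rw [← add_assoc, vadd_self, zero_add]
  · intro w _; rw [← add_assoc, vadd_self, zero_add]
  · intro w _; rfl

lemma sum_chi (W : Submodule (ZMod 2) (Fin (2 * m) → ZMod 2))
    (f : (Fin (2 * m) → ZMod 2) → ZMod 2) :
    ∑ w ∈ (W : Set (Fin (2 * m) → ZMod 2)).toFinset, chi (f w)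
      = ((W : Set (Fin (2 * m) → ZMod 2)).toFinset.card : ℤ)
        - 2 * ((W : Set (Fin (2 * m) → ZMod 2)).toFinset.filter (fun w => f w = 1)).card := by
  have h : ∀ w, chi (f w) = 1 - 2 * (if f w = 1 then (1 : ℤ) else 0) := fun w => chi_val _
  simp_rw [h]
  rw [Finset.sum_sub_distrib, Finset.sum_const, ← Finset.mul_sum, Finset.sum_boole]
  simp

lemma inner_sum (W : Submodule (ZMod 2) (Fin (2 * m) → ZMod 2)) (h : Fin (2 * m) → ZMod 2) :
    ∑ w ∈ (W : Set (Fin (2 * m) → ZMod 2)).toFinset, chi (Bform m w h)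
      = if ∀ w ∈ W, Bform m w h = 0
        then ((W : Set (Fin (2 * m) → ZMod 2)).toFinset.card : ℤ) else 0 := by
  split_ifs with hc
  · rw [Finset.sum_congr rfl (fun w hw => by
      rw [hc w (by simpa [Set.mem_toFinset] using hw), chi_zero])]
    simp
  · push_neg at hc
    obtain ⟨w₀, hw₀, hne⟩ := hc
    have h1 : Bform m w₀ h = 1 := zmod2_ne_zero _ hne
    have hclosed : ∀ x ∈ (W : Set (Fin (2 * m) → ZMod 2)).toFinset,
        w₀ + x ∈ (W : Set (Fin (2 * m) → ZMod 2)).toFinset := by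
      intro x hx
      simp only [Set.mem_toFinset, SetLike.mem_coe] at hx ⊢
      exact W.add_mem hw₀ hx
    have hS := sum_transl' hclosed (fun w => chi (Bform m w h))
    have h2 : ∀ w, chi (Bform m (w₀ + w) h) = - chi (Bform m w h) := by
      intro w
      rw [Bform_add_left, chi_add, h1, chi_one]
      ring
    simp_rw [h2] at hS
    rw [Finset.sum_neg_distrib] at hS
    linarith

lemma key_identity (W : Submodule (ZMod 2) (Fin (2 * m) → ZMod 2))
    (t : Fin (2 * m) → ZMod 2) :
    (∑ w ∈ (W : Set (Fin (2 * m) → ZMod 2)).toFinset, chi (qForm m (t + w))) ^ 2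
      = 2 ^ (Module.finrank (ZMod 2) W)
        * ∑ h ∈ (W : Set (Fin (2 * m) → ZMod 2)).toFinset.filter
            (fun h => ∀ w ∈ W, Bform m w h = 0),
            chi (Bform m t h + qForm m h) := by
  classical
  set WF := (W : Set (Fin (2 * m) → ZMod 2)).toFinset with hWF
  have hclosed : ∀ w₀, w₀ ∈ W → ∀ x ∈ WF, w₀ + x ∈ WF := by
    intro w₀ hw₀ x hx
    simp only [hWF, Set.mem_toFinset, SetLike.mem_coe] at hx ⊢
    exact W.add_mem hw₀ hx
  have step1 : (∑ w ∈ WF, chi (qForm m (t + w))) ^ 2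
      = ∑ w ∈ WF, ∑ h ∈ WF, chi (Bform m t h + qForm m h) * chi (Bform m w h) := by
    rw [sq, Finset.sum_mul_sum]
    apply Finset.sum_congr rfl
    intro w hw
    have hw' : w ∈ W := by simpa [hWF, Set.mem_toFinset] using hw
    rw [← sum_transl' (hclosed w hw') (fun u => chi (qForm m (t + w)) * chi (qForm m (t + u)))]
    apply Finset.sum_congr rfl
    intro h _
    have hq : qForm m (t + w) + qForm m (t + (w + h))
        = (Bform m t h + qForm m h) + Bform m w h := by
      have e1 : t + (w + h) = (t + w) + h := (add_assoc t w h).symm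
      rw [e1, qForm_add (t + w) h, Bform_add_left]
      linear_combination (zmod2_add_self (qForm m (t + w)))
    rw [← chi_add, hq, chi_add]
  rw [step1, Finset.sum_comm]
  have step2 : ∀ h ∈ WF, ∑ w ∈ WF, chi (Bform m t h + qForm m h) * chi (Bform m w h)
      = chi (Bform m t h + qForm m h)
        * (if ∀ w ∈ W, Bform m w h = 0 then (WF.card : ℤ) else 0) := by
    intro h _
    rw [← Finset.mul_sum, inner_sum W h]
  rw [Finset.sum_congr rfl step2]
  have step3 : ∑ h ∈ WF, chi (Bform m t h + qForm m h)
        * (if ∀ w ∈ W, Bform m w h = 0 then (WF.card : ℤ) else 0)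
      = ∑ h ∈ WF.filter (fun h => ∀ w ∈ W, Bform m w h = 0),
          chi (Bform m t h + qForm m h) * (WF.card : ℤ) := by
    rw [Finset.sum_filter]
    apply Finset.sum_congr rfl
    intro h _
    split_ifs <;> simp
  rw [step3, ← Finset.sum_mul, toFinset_card_subm W]
  push_cast
  ring

lemma mem_perp {W : Submodule (ZMod 2) (Fin (2 * m) → ZMod 2)} {h : Fin (2 * m) → ZMod 2} :
    h ∈ (Bl m).orthogonal W ↔ ∀ w ∈ W, Bform m w h = 0 := by
  rw [LinearMap.BilinForm.mem_orthogonal_iff]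
  rfl

lemma finrank_V : Module.finrank (ZMod 2) (Fin (2 * m) → ZMod 2) = 2 * m :=
  Module.finrank_fin_fun _

lemma finrank_perp (W : Submodule (ZMod 2) (Fin (2 * m) → ZMod 2)) :
    Module.finrank (ZMod 2) ((Bl m).orthogonal W)
      = 2 * m - Module.finrank (ZMod 2) W := by
  rw [LinearMap.BilinForm.finrank_orthogonal Bl_nondeg W, finrank_V]

section D2

variable {W : Submodule (ZMod 2) (Fin (2 * m) → ZMod 2)} {t : Fin (2 * m) → ZMod 2}

lemma D2_perp_le (hn : ∀ u, (∀ w ∈ W, Bform m w u = 0) → Bform m t u + qForm m u = 0) :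
    (Bl m).orthogonal W ≤ W := by
  have hiso : ∀ u ∈ (Bl m).orthogonal W, ∀ u' ∈ (Bl m).orthogonal W, Bform m u u' = 0 := by
    intro u hu u' hu'
    rw [mem_perp] at hu hu'
    have hmem : ∀ w ∈ W, Bform m w (u + u') = 0 := by
      intro w hw
      rw [Bform_add_right, hu w hw, hu' w hw, add_zero]
    have e := hn (u + u') hmem
    rw [Bform_add_right, qForm_add] at e
    have e1 := hn u hu
    have e2 := hn u' hu'
    linear_combination e - e1 - e2
  have h1 : (Bl m).orthogonal W ≤ (Bl m).orthogonal ((Bl m).orthogonal W) := by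
    intro u hu
    rw [LinearMap.BilinForm.mem_orthogonal_iff]
    intro y hy
    exact hiso y hy u hu
  rwa [LinearMap.BilinForm.orthogonal_orthogonal Bl_nondeg Bl_refl W] at h1

lemma D2_exists_h0 (hn : ∀ u, (∀ w ∈ W, Bform m w u = 0) → Bform m t u + qForm m u = 0)
    {v : Fin (2 * m) → ZMod 2} (hv : v ∉ W) :
    ∃ h₀, h₀ ∈ W ∧ (∀ w ∈ W, Bform m w h₀ = 0) ∧ Bform m v h₀ = 1 := by
  have hvo : v ∉ (Bl m).orthogonal ((Bl m).orthogonal W) := by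
    rwa [LinearMap.BilinForm.orthogonal_orthogonal Bl_nondeg Bl_refl W]
  rw [LinearMap.BilinForm.mem_orthogonal_iff] at hvo
  push_neg at hvo
  obtain ⟨y, hy, hne⟩ := hvo
  have hByv : Bform m y v ≠ 0 := hne
  refine ⟨y, D2_perp_le hn hy, mem_perp.mp hy, ?_⟩
  rw [Bform_symm]
  exact zmod2_ne_zero _ hByv

lemma D2_cnt0_bound (hn : ∀ u, (∀ w ∈ W, Bform m w u = 0) → Bform m t u + qForm m u = 0) :
    (2 * (cnt0 m W t : ℤ) - 2 ^ Module.finrank (ZMod 2) W) ^ 2 ≤ 2 ^ (2 * m) := by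
  classical
  set e := Module.finrank (ZMod 2) W with he
  have hZ : ∑ w ∈ (W : Set (Fin (2 * m) → ZMod 2)).toFinset, chi (qForm m (t + w))
      = (2 ^ e : ℤ) - 2 * cnt m W t := by
    rw [sum_chi W (fun w => qForm m (t + w)), toFinset_card_subm W]
    unfold cnt
    push_cast
    ring
  have hsum : cnt m W t + cnt0 m W t = 2 ^ e := cnt_add_cnt0 W t
  have hZ' : ∑ w ∈ (W : Set (Fin (2 * m) → ZMod 2)).toFinset, chi (qForm m (t + w))
      = 2 * (cnt0 m W t : ℤ) - 2 ^ e := by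
    rw [hZ]
    have : (cnt m W t : ℤ) + cnt0 m W t = 2 ^ e := by exact_mod_cast hsum
    linarith
  have hkey := key_identity W t
  rw [hZ'] at hkey
  have hterms : ∑ h ∈ (W : Set (Fin (2 * m) → ZMod 2)).toFinset.filter
        (fun h => ∀ w ∈ W, Bform m w h = 0), chi (Bform m t h + qForm m h)
      = ((W : Set (Fin (2 * m) → ZMod 2)).toFinset.filter
        (fun h => ∀ w ∈ W, Bform m w h = 0)).card := by
    rw [Finset.sum_congr rfl (fun h hh => by
      rw [hn h (Finset.mem_filter.mp hh).2, chi_zero])]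
    simp
  rw [hterms] at hkey
  have hsub : ((W : Set (Fin (2 * m) → ZMod 2)).toFinset.filter
        (fun h => ∀ w ∈ W, Bform m w h = 0)).card
      ≤ 2 ^ (2 * m - e) := by
    have hsubset : (W : Set (Fin (2 * m) → ZMod 2)).toFinset.filter
          (fun h => ∀ w ∈ W, Bform m w h = 0)
        ⊆ (((Bl m).orthogonal W : Set (Fin (2 * m) → ZMod 2))).toFinset := by
      intro x hx
      rw [Set.mem_toFinset]
      exact mem_perp.mpr (Finset.mem_filter.mp hx).2
    calc _ ≤ (((Bl m).orthogonal W : Set (Fin (2 * m) → ZMod 2))).toFinset.card :=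
          Finset.card_le_card hsubset
      _ = 2 ^ Module.finrank (ZMod 2) ((Bl m).orthogonal W) :=
          toFinset_card_subm _
      _ = 2 ^ (2 * m - e) := by rw [finrank_perp W]
  have hle : e ≤ 2 * m := by
    have := Submodule.finrank_le W
    rwa [finrank_V] at this
  calc (2 * (cnt0 m W t : ℤ) - 2 ^ e) ^ 2 = 2 ^ e * ((W : Set (Fin (2 * m) → ZMod 2)).toFinset.filter
        (fun h => ∀ w ∈ W, Bform m w h = 0)).card := hkey
    _ ≤ 2 ^ e * 2 ^ (2 * m - e) := by
        apply mul_le_mul_of_nonneg_left _ (by positivity)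
        exact_mod_cast hsub
    _ = 2 ^ (2 * m) := by
        rw [← pow_add]
        congr 1
        omega

lemma D2_cnt_exact (hn : ∀ u, (∀ w ∈ W, Bform m w u = 0) → Bform m t u + qForm m u = 0)
    {v : Fin (2 * m) → ZMod 2} (hv : v ∉ W) :
    2 * (cnt m W (t + v) : ℤ) = 2 ^ Module.finrank (ZMod 2) W := by
  classical
  set e := Module.finrank (ZMod 2) W with he
  obtain ⟨h₀, hh₀W, hh₀perp, hBvh₀⟩ := D2_exists_h0 hn hv
  set F := (W : Set (Fin (2 * m) → ZMod 2)).toFinset.filter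
      (fun h => ∀ w ∈ W, Bform m w h = 0) with hF
  have hSzero : ∑ h ∈ F, chi (Bform m (t + v) h + qForm m h) = 0 := by
    have hrw : ∀ h ∈ F, chi (Bform m (t + v) h + qForm m h) = chi (Bform m v h) := by
      intro h hh
      have hp := (Finset.mem_filter.mp hh).2
      have := hn h hp
      congr 1
      rw [Bform_add_left]
      linear_combination this
    rw [Finset.sum_congr rfl hrw]
    have hclosed : ∀ x ∈ F, h₀ + x ∈ F := by
      intro x hx
      rw [hF, Finset.mem_filter] at hx ⊢
      refine ⟨?_, ?_⟩
      · rw [Set.mem_toFinset] at hx ⊢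
        exact W.add_mem hh₀W hx.1
      · intro w hw
        rw [Bform_add_right, hh₀perp w hw, hx.2 w hw, add_zero]
    have hS := sum_transl' hclosed (fun h => chi (Bform m v h))
    have h2 : ∀ h, chi (Bform m v (h₀ + h)) = - chi (Bform m v h) := by
      intro h
      rw [Bform_add_right, chi_add, hBvh₀, chi_one]
      ring
    simp_rw [h2] at hS
    rw [Finset.sum_neg_distrib] at hS
    linarith
  have hkey := key_identity W (t + v)
  rw [hSzero, mul_zero, pow_eq_zero_iff (by norm_num)] at hkey
  have hZ : ∑ w ∈ (W : Set (Fin (2 * m) → ZMod 2)).toFinset, chi (qForm m ((t + v) + w))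
      = (2 ^ e : ℤ) - 2 * cnt m W (t + v) := by
    rw [sum_chi W (fun w => qForm m ((t + v) + w)), toFinset_card_subm W]
    unfold cnt
    push_cast
    ring
  rw [hZ] at hkey
  linarith

end D2

lemma cnt0_eq_cnt_transl {W : Submodule (ZMod 2) (Fin (2 * m) → ZMod 2)}
    {t u : Fin (2 * m) → ZMod 2} (hu1 : ∀ w ∈ W, Bform m w u = 0)
    (hu2 : Bform m t u + qForm m u = 1) :
    cnt0 m W t = cnt m W (t + u) := by
  unfold cnt0 cnt
  congr 1
  apply Finset.filter_congr
  intro w hw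
  rw [Set.mem_toFinset] at hw
  have e1 : t + u + w = (t + w) + u := by abel
  rw [e1, qForm_add (t + w) u, Bform_add_left, hu1 w hw, add_zero]
  have hq : qForm m (t + w) + (qForm m u + Bform m t u) = qForm m (t + w) + 1 := by
    rw [add_comm (qForm m u), hu2]
  constructor
  · intro h0
    rw [show qForm m (t + w) + qForm m u + Bform m t u
        = qForm m (t + w) + (qForm m u + Bform m t u) by ring, hq, h0, zero_add]
  · intro h1
    rw [show qForm m (t + w) + qForm m u + Bform m t u
        = qForm m (t + w) + (qForm m u + Bform m t u) by ring, hq] at h1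
    exact (zmod2_add_one _).mp h1

end Stmt8

open Stmt8 in
theorem stmt_8 (e k : ℕ) (he : 0 < e) (hk : 1 < k)
    (hhyp : ∀ (B : Set (Fin (2 * (k - 1)) → ZMod 2)) (dB : ℕ),
      IsAffineOfDim B dB → (dB = e ∨ dB = e + 1) →
      ((B ∩ Sset (k - 1)).ncard : ℝ) ≤ 2 ^ ((dB : ℤ) - 1) + 2 ^ ((k : ℤ) - 3))
    (a b c : Fin (2 * (k - 1)) → ZMod 2)
    (W : Submodule (ZMod 2) (Fin (2 * (k - 1)) → ZMod 2))
    (hW : Module.finrank (ZMod 2) W = e)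
    (hdisj : ([(a + ·) '' (W : Set _), (a + b + ·) '' (W : Set _),
        (a + c + ·) '' (W : Set _), (a + b + c + ·) '' (W : Set _)] :
        List (Set (Fin (2 * (k - 1)) → ZMod 2))).Pairwise Disjoint) :
    (((a + ·) '' (W : Set _) ∩ Sset (k - 1)).ncard : ℝ)
        + (((a + b + ·) '' (W : Set _) ∩ Sset (k - 1)).ncard : ℝ)
        + (((a + c + ·) '' (W : Set _) ∩ Sset (k - 1)).ncard : ℝ)
        + (((a + b + c + ·) '' (W : Set _) ∩ Rset (k - 1)).ncard : ℝ)
      ≤ 2 ^ ((e : ℤ) + 1) + 2 ^ ((k : ℤ) - 2) := by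
  classical
  simp only [List.pairwise_cons, List.mem_cons, List.mem_singleton, List.not_mem_nil,
    forall_eq_or_imp, forall_eq, List.Pairwise.nil, and_true, IsEmpty.forall_iff] at hdisj
  obtain ⟨⟨h01, h02, h03⟩, ⟨h12, h13⟩, h23⟩ := hdisj
  have two0 : (2 : ℝ) ≠ 0 := two_ne_zero
  -- membership facts
  have hbW : b ∉ W := by
    intro hb
    have hx1 : a + b ∈ (a + ·) '' (W : Set _) := ⟨b, hb, rfl⟩
    have hx2 : a + b ∈ (a + b + ·) '' (W : Set _) := ⟨0, W.zero_mem, by simp⟩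
    exact (Set.disjoint_left.mp h01 hx1) hx2
  have hcW : c ∉ W := by
    intro hc
    have hx1 : a + c ∈ (a + ·) '' (W : Set _) := ⟨c, hc, rfl⟩
    have hx2 : a + c ∈ (a + c + ·) '' (W : Set _) := ⟨0, W.zero_mem, by simp⟩
    exact (Set.disjoint_left.mp h02 hx1) hx2
  have hbcW : b + c ∉ W := by
    intro hbc
    have hveq : a + b + (b + c) = a + c := by
      rw [show a + b + (b + c) = a + c + (b + b) from by abel, vadd_self, add_zero]
    have hx1 : a + c ∈ (a + b + ·) '' (W : Set _) := ⟨b + c, hbc, hveq⟩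
    have hx2 : a + c ∈ (a + c + ·) '' (W : Set _) := ⟨0, W.zero_mem, by simp⟩
    exact (Set.disjoint_left.mp h12 hx1) hx2
  rw [ncardS W a, ncardS W (a + b), ncardS W (a + c), ncardR W (a + b + c)]
  set X := (2 : ℝ) ^ (e : ℤ) with hXdef
  set Y := (2 : ℝ) ^ ((k : ℤ) - 3) with hYdef
  have hgoal : (2 : ℝ) ^ ((e : ℤ) + 1) + 2 ^ ((k : ℤ) - 2) = 2 * X + 2 * Y := by
    rw [zpow_add_one₀ two0, show (k : ℤ) - 2 = ((k : ℤ) - 3) + 1 by ring,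
      zpow_add_one₀ two0]
    ring
  rw [hgoal]
  have hXnat : ((2 ^ e : ℕ) : ℝ) = X := by
    rw [hXdef, zpow_natCast]
    push_cast
    ring
  have hE1 : (2 : ℝ) ^ ((e : ℤ) - 1) * 2 = X := by
    rw [hXdef, ← zpow_add_one₀ two0, show (e : ℤ) - 1 + 1 = (e : ℤ) by ring]
  have SINGLE : ∀ t, (cnt (k - 1) W t : ℝ) ≤ X / 2 + Y := by
    intro t
    have h := hhyp _ e ⟨t, W, hW, rfl⟩ (Or.inl rfl)
    rw [ncardS W t] at h
    linarith
  have PAIR : ∀ t v, v ∉ W →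
      (cnt (k - 1) W t : ℝ) + cnt (k - 1) W (t + v) ≤ X + Y := by
    intro t v hv
    have hiso : IsAffineOfDim
        ((t + ·) '' ((W ⊔ Submodule.span (ZMod 2) {v} : Submodule (ZMod 2) _) : Set _))
        (e + 1) :=
      ⟨t, _, by rw [finrank_sup_span hv, hW], rfl⟩
    have h := hhyp _ (e + 1) hiso (Or.inr rfl)
    rw [ncardS_union hv t] at h
    push_cast at h
    rw [show ((e : ℤ) + 1) - 1 = (e : ℤ) by ring] at h
    linarith
  have TOT : ∀ t, (cnt (k - 1) W t : ℝ) + cnt0 (k - 1) W t = X := by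
    intro t
    have h := cnt_add_cnt0 W t
    rw [hW] at h
    have h2 := congrArg (Nat.cast : ℕ → ℝ) h
    push_cast at h2
    rw [← hXnat]
    push_cast
    linarith
  by_cases hex : ∃ u, (∀ w ∈ W, Bform (k - 1) w u = 0)
      ∧ Bform (k - 1) (a + b + c) u + qForm (k - 1) u = 1
  · obtain ⟨u, hu1, hu2⟩ := hex
    have htr : cnt0 (k - 1) W (a + b + c) = cnt (k - 1) W (a + b + c + u) :=
      cnt0_eq_cnt_transl hu1 hu2
    by_cases huW : u ∈ W
    · have h1 : cnt (k - 1) W (a + b + c + u) = cnt (k - 1) W (a + b + c) :=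
        cnt_shift huW _
      have hnn : cnt0 (k - 1) W (a + b + c) = cnt (k - 1) W (a + b + c) := htr.trans h1
      have hT := TOT (a + b + c)
      rw [hnn] at hT
      have hP := PAIR a b hbW
      have hS := SINGLE (a + c)
      rw [hnn]
      linarith
    · by_cases hub : u + b ∈ W
      · have hmem : b + u ∈ W := by rwa [add_comm] at hub
        have hv1 : a + b + c + u = a + c + (b + u) := by abel
        have h1 : cnt (k - 1) W (a + b + c + u) = cnt (k - 1) W (a + c) := by
          rw [hv1]
          exact cnt_shift hmem (a + c)
        have hnn := htr.trans h1
        rw [hnn]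
        have hP1 := PAIR a c hcW
        have hP2' := PAIR (a + b) (b + c) hbcW
        rw [show a + b + (b + c) = a + c + (b + b) from by abel, vadd_self, add_zero] at hP2'
        linarith
      · by_cases huc : u + c ∈ W
        · have hmem : c + u ∈ W := by rwa [add_comm] at huc
          have hv1 : a + b + c + u = a + b + (c + u) := by abel
          have h1 : cnt (k - 1) W (a + b + c + u) = cnt (k - 1) W (a + b) := by
            rw [hv1]
            exact cnt_shift hmem (a + b)
          have hnn := htr.trans h1
          rw [hnn]
          have hP1 := PAIR a b hbW
          have hP2' := PAIR (a + c) (b + c) hbcW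
          rw [show a + c + (b + c) = a + b + (c + c) from by abel, vadd_self, add_zero] at hP2'
          linarith
        · by_cases hubc : u + (b + c) ∈ W
          · have hmem : b + c + u ∈ W := by rwa [add_comm] at hubc
            have hv1 : a + b + c + u = a + (b + c + u) := by abel
            have h1 : cnt (k - 1) W (a + b + c + u) = cnt (k - 1) W a := by
              rw [hv1]
              exact cnt_shift hmem a
            have hnn := htr.trans h1
            rw [hnn]
            have hP1 := PAIR a b hbW
            have hP2 := PAIR a c hcW
            linarith
          · have hbu : b + u ∉ W := by
              intro h
              rw [add_comm] at h
              exact hub h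
            have hP1 := PAIR a b hbW
            have hP4 := PAIR (a + c) (b + u) hbu
            rw [show a + c + (b + u) = a + b + c + u from by abel] at hP4
            rw [htr]
            linarith
  · push_neg at hex
    have hn : ∀ u, (∀ w ∈ W, Bform (k - 1) w u = 0) →
        Bform (k - 1) (a + b + c) u + qForm (k - 1) u = 0 :=
      fun u h => (zmod2_ne_one _).mp (hex u h)
    have hxhalf : ∀ v, v ∉ W → ∀ t', a + b + c + v = t' →
        (cnt (k - 1) W t' : ℝ) = X / 2 := by
      intro v hv t' ht'
      have hE := D2_cnt_exact hn hv
      rw [hW, ht'] at hE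
      have h2 := congrArg (Int.cast : ℤ → ℝ) hE
      push_cast at h2
      rw [← hXnat]
      push_cast
      linarith
    have hS0 : (cnt (k - 1) W a : ℝ) = X / 2 := by
      apply hxhalf (b + c) hbcW
      rw [show a + b + c + (b + c) = a + (b + b) + (c + c) from by abel, vadd_self, vadd_self,
        add_zero, add_zero]
    have hS1 : (cnt (k - 1) W (a + b) : ℝ) = X / 2 := by
      apply hxhalf c hcW
      rw [show a + b + c + c = a + b + (c + c) from by abel, vadd_self, add_zero]
    have hS2 : (cnt (k - 1) W (a + c) : ℝ) = X / 2 := by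
      apply hxhalf b hbW
      rw [show a + b + c + b = a + c + (b + b) from by abel, vadd_self, add_zero]
    have hE3 := D2_cnt0_bound hn (t := a + b + c)
    rw [hW] at hE3
    have hPpos : (0 : ℤ) < 2 ^ (k - 1) := by positivity
    have hPP : ((2 : ℤ) ^ (k - 1)) ^ 2 = 2 ^ (2 * (k - 1)) := by
      rw [← pow_mul]
      congr 1
      omega
    have hZle : 2 * (cnt0 (k - 1) W (a + b + c) : ℤ) - 2 ^ e ≤ 2 ^ (k - 1) := by
      nlinarith [hE3, hPpos, hPP, sq_nonneg (2 * (cnt0 (k - 1) W (a + b + c) : ℤ)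
        - 2 ^ e + 2 ^ (k - 1))]
    have hZR : 2 * (cnt0 (k - 1) W (a + b + c) : ℝ) - X ≤ 4 * Y := by
      have h2 : ((2 * (cnt0 (k - 1) W (a + b + c) : ℤ) - 2 ^ e : ℤ) : ℝ)
          ≤ (((2 : ℤ) ^ (k - 1) : ℤ) : ℝ) := by exact_mod_cast hZle
      push_cast at h2
      have h4Y : (2 : ℝ) ^ (k - 1 : ℕ) = 4 * Y := by
        rw [← zpow_natCast (2 : ℝ) (k - 1), show ((k - 1 : ℕ) : ℤ) = ((k : ℤ) - 3) + 2 by omega,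
          zpow_add₀ two0, hYdef, show ((2 : ℝ) ^ (2 : ℤ)) = 4 by norm_num]
        ring
      have hXe : (2 : ℝ) ^ (e : ℕ) = X := by rw [← hXnat]; push_cast; ring
      rw [h4Y, hXe] at h2
      linarith
    have hTOT := TOT (a + b + c)
    linarith
end

section
/- Let k be a positive integer, R a real number with 0 < R < 1, and m a positive real number. Then for all nonnegative real numbers c₀, c₁, ..., c_{2k} satisfying Σ_{s=0}^{2k} c_s = m and Σ_{s=0}^{2k} s·c_s ≤ 2kRm, one has Σ_{s=0}^{2k} c_s·P[s] < (1/2 + R)·m. -/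
/-- The overlap profile `P[s]` of the Maiorana–McFarland target set:
`P[0] = 1/2 - 2^{-(k+1)}`, `P[1] = 1/2`, `P[s] = 1/2 + 2^{-(k-s+2)}` for
`1 < s ≤ k`, and `P[s] = 1` for `k < s ≤ 2k`. -/
noncomputable def Pfun (k : ℕ) (s : ℕ) : ℝ :=
  if s = 0 then 1 / 2 - (2 : ℝ) ^ (-((k : ℤ) + 1))
  else if s = 1 then 1 / 2
  else if s ≤ k then 1 / 2 + (2 : ℝ) ^ (-((k : ℤ) - (s : ℤ) + 2))
  else 1

lemma aux_pow : ∀ d s : ℕ, 1 ≤ s → s + d ≤ s * 2 ^ d := by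
  intro d
  induction d with
  | zero => intro s hs; simp
  | succ d ih =>
    intro s hs
    have h1 : s + (d + 1) ≤ (s + 1) + d := by omega
    have h2 : (s + 1) + d ≤ (s + 1) * 2 ^ d := ih (s + 1) (by omega)
    have h3 : (s + 1) * 2 ^ d ≤ (2 * s) * 2 ^ d :=
      Nat.mul_le_mul_right _ (by omega)
    have h4 : (2 * s) * 2 ^ d = s * 2 ^ (d + 1) := by ring
    omega

lemma Pfun_lt (k : ℕ) (hk : 0 < k) (s : ℕ) (hs : s ≤ 2 * k) :
    Pfun k s < 1 / 2 + (s : ℝ) / (2 * k) := by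
  have hk' : (0 : ℝ) < 2 * k := by positivity
  unfold Pfun
  by_cases h0 : s = 0
  · subst h0
    have h := zpow_pos (by norm_num : (0:ℝ) < 2) (-((k : ℤ) + 1))
    rw [if_pos rfl]
    simp only [Nat.cast_zero, zero_div]
    linarith
  · by_cases h1 : s = 1
    · subst h1
      simp only [if_neg h0, if_pos rfl]
      have : (0 : ℝ) < (1 : ℝ) / (2 * k) := by positivity
      push_cast
      linarith
    · by_cases h2 : s ≤ k
      · simp only [if_neg h0, if_neg h1, if_pos h2]
        have hs2 : 2 ≤ s := by omega
        set n : ℕ := k - s + 2 with hn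
        have hcast : -((k : ℤ) - (s : ℤ) + 2) = -(n : ℤ) := by omega
        rw [hcast, zpow_neg, zpow_natCast]
        have hnat : 2 * k < s * 2 ^ n := by
          have h := aux_pow (k - s) s (by omega)
          have hpow : 2 ^ n = 4 * 2 ^ (k - s) := by
            rw [hn, pow_add]; ring
          have hks : k ≤ s * 2 ^ (k - s) :=
            le_trans (by omega : k ≤ s + (k - s)) h
          have h4 : s * 2 ^ n = 4 * (s * 2 ^ (k - s)) := by rw [hpow]; ring
          linarith
        have hreal : (2 : ℝ) * k < s * 2 ^ n := by exact_mod_cast hnat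
        have h2n : (0 : ℝ) < (2 : ℝ) ^ n := by positivity
        have hlt : ((2 : ℝ) ^ n)⁻¹ < (s : ℝ) / (2 * k) := by
          rw [inv_eq_one_div, div_lt_div_iff₀ h2n hk']
          linarith
        linarith
      · simp only [if_neg h0, if_neg h1, if_neg h2]
        have hks : (k : ℝ) < s := by exact_mod_cast Nat.lt_of_not_le h2
        have hlt : (1 : ℝ) / 2 < (s : ℝ) / (2 * k) := by
          rw [div_lt_div_iff₀ two_pos hk']
          linarith
        linarith

theorem stmt_10 (k : ℕ) (hk : 0 < k) (R m : ℝ) (hR0 : 0 < R) (hR1 : R < 1)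
    (hm : 0 < m) (c : ℕ → ℝ) (hc : ∀ s ≤ 2 * k, 0 ≤ c s)
    (hsum : ∑ s ∈ Finset.range (2 * k + 1), c s = m)
    (hbudget : ∑ s ∈ Finset.range (2 * k + 1), (s : ℝ) * c s ≤ 2 * k * R * m) :
    ∑ s ∈ Finset.range (2 * k + 1), c s * Pfun k s < (1 / 2 + R) * m := by
  have hk' : (0 : ℝ) < 2 * k := by positivity
  obtain ⟨i, hi, hci⟩ : ∃ i ∈ Finset.range (2 * k + 1), c i ≠ 0 :=
    Finset.exists_ne_zero_of_sum_ne_zero (by rw [hsum]; exact hm.ne')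
  have hi' : i ≤ 2 * k := by have := Finset.mem_range.mp hi; omega
  have hcipos : 0 < c i := lt_of_le_of_ne (hc i hi') (Ne.symm hci)
  have key : ∑ s ∈ Finset.range (2 * k + 1), c s * Pfun k s
      < ∑ s ∈ Finset.range (2 * k + 1), c s * (1 / 2 + (s : ℝ) / (2 * k)) := by
    apply Finset.sum_lt_sum
    · intro j hj
      have hj' : j ≤ 2 * k := by have := Finset.mem_range.mp hj; omega
      exact mul_le_mul_of_nonneg_left (Pfun_lt k hk j hj').le (hc j hj')
    · exact ⟨i, hi, mul_lt_mul_of_pos_left (Pfun_lt k hk i hi') hcipos⟩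
  have expand : ∑ s ∈ Finset.range (2 * k + 1), c s * (1 / 2 + (s : ℝ) / (2 * k))
      = (1 / 2) * (∑ s ∈ Finset.range (2 * k + 1), c s)
        + (1 / (2 * k)) * (∑ s ∈ Finset.range (2 * k + 1), (s : ℝ) * c s) := by
    rw [Finset.mul_sum, Finset.mul_sum, ← Finset.sum_add_distrib]
    apply Finset.sum_congr rfl
    intro s _
    field_simp
  rw [expand, hsum] at key
  have hbud : (1 / (2 * (k : ℝ))) * (∑ s ∈ Finset.range (2 * k + 1), (s : ℝ) * c s)
      ≤ (1 / (2 * (k : ℝ))) * (2 * k * R * m) :=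
    mul_le_mul_of_nonneg_left hbudget (by positivity)
  have heq : (1 / (2 * (k : ℝ))) * (2 * k * R * m) = R * m := by
    field_simp
  linarith
end

section
/- Let n and k be positive integers and let d₁, ..., d_k and s₁, ..., s_k be positive integers (d_i ≥ 1 and s_i ≥ 1 for all i) satisfying Σ_{i=1}^k s_i ≤ Σ_{i=1}^k d_i ≤ ⌊n/2⌋ + 1. Then, setting d₀ = 0, the total cycle count satisfies Σ_{i=1}^k (2·d_i + s_i + d_{i-1} + 2) ≤ 6·⌊n/2⌋ + 5. -/
theorem stmt_16 (n k : ℕ) (hn : 0 < n) (hk : 0 < k)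
    (d s : ℕ → ℕ) (hd0 : d 0 = 0)
    (hd : ∀ i ∈ Finset.Icc 1 k, 1 ≤ d i) (hs : ∀ i ∈ Finset.Icc 1 k, 1 ≤ s i)
    (hsd : ∑ i ∈ Finset.Icc 1 k, s i ≤ ∑ i ∈ Finset.Icc 1 k, d i)
    (hdsum : ∑ i ∈ Finset.Icc 1 k, d i ≤ n / 2 + 1) :
    ∑ i ∈ Finset.Icc 1 k, (2 * d i + s i + d (i - 1) + 2) ≤ 6 * (n / 2) + 5 := by
  set A := ∑ i ∈ Finset.Icc 1 k, s i with hA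
  set B := ∑ i ∈ Finset.Icc 1 k, d i with hB
  set T := ∑ i ∈ Finset.Icc 1 k, d (i - 1) with hT
  have hkmem : k ∈ Finset.Icc 1 k := Finset.mem_Icc.mpr ⟨hk, le_rfl⟩
  have hdk : 1 ≤ d k := hd k hkmem
  -- k ≤ A
  have hkA : k ≤ A := by
    have := Finset.card_nsmul_le_sum (Finset.Icc 1 k) s 1 hs
    simpa [Nat.card_Icc, smul_eq_mul] using this
  -- T + d k = B
  have hTB : T + d k = B := by
    have h1 : T = ∑ i ∈ Finset.range k, d i := by
      rw [hT, show Finset.Icc 1 k = Finset.Ico 1 (k+1) from rfl,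
        Finset.sum_Ico_eq_sum_range]
      simp [add_comm]
    have h2 : B + d 0 = ∑ i ∈ Finset.range (k + 1), d i := by
      rw [hB, Finset.range_eq_Ico, Finset.sum_Ico_eq_sum_range]
      rw [show Finset.Icc 1 k = Finset.Ico 1 (k+1) by rfl]
      rw [Finset.sum_Ico_eq_sum_range]
      simp [Finset.sum_range_succ', add_comm]
    rw [h1, hd0] at *
    have := Finset.sum_range_succ d k
    omega
  -- total sum
  have hsum : ∑ i ∈ Finset.Icc 1 k, (2 * d i + s i + d (i - 1) + 2)
      = 2 * B + A + T + 2 * k := by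
    rw [hA, hB, hT]
    rw [Finset.sum_add_distrib, Finset.sum_add_distrib, Finset.sum_add_distrib,
      Finset.sum_const, ← Finset.mul_sum]
    simp [Nat.card_Icc, mul_comm]
  rw [hsum]
  omega
end
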